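/- arXiv:2401.00628 — 6 statements merged into one kernel-verified Lean document; each statement's English description precedes it below -/
import Mathlib

section
/- Let d ≥ 1. For every permutation π ∈ S_d there exists exactly one strictly monotone factorization of π into transpositions, i.e., exactly one sequence of transpositions ((i_1 j_1), …, (i_r j_r)) with i_k < j_k for all k and j_1 < j_2 < ⋯ < j_r whose product (i_1 j_1)⋯(i_r j_r) equals π; moreover, its length r equals |π| = d − ℓ(π), the minimal length of any transposition factorization of π. Equivalently, between every pair of vertices of the Hurwitz–Cayley graph there is a unique strictly monotone walk, and this walk is a geodesic. -/
noncomputable section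

/-- The number of cycles of a permutation of `{1,…,d}`, counting fixed points as 1-cycles. -/
def ell {d : ℕ} (π : Equiv.Perm (Fin d)) : ℕ :=
  π.cycleType.card + (d - π.support.card)

/-- The transposition associated with a pair of points. -/
def toSwap {d : ℕ} (p : Fin d × Fin d) : Equiv.Perm (Fin d) :=
  Equiv.swap p.1 p.2

open Equiv Equiv.Perm in
/-- products of swaps with small labels fix large points -/
lemma prod_fix_of_lt {d : ℕ} (l : List (Fin d × Fin d)) (hl : ∀ p ∈ l, p.1 < p.2)
    (y : Fin d) (hy : ∀ p ∈ l, p.2 < y) : (l.map toSwap).prod y = y := by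
  induction l with
  | nil => simp
  | cons p l ih =>
    have h1 : p.1 < p.2 := hl p List.mem_cons_self
    have h2 : p.2 < y := hy p List.mem_cons_self
    simp only [List.map_cons, List.prod_cons, Equiv.Perm.mul_apply]
    rw [ih (fun q hq => hl q (List.mem_cons_of_mem _ hq))
        (fun q hq => hy q (List.mem_cons_of_mem _ hq))]
    exact Equiv.swap_apply_of_ne_of_ne ((h1.trans h2).ne') h2.ne'

open Equiv Equiv.Perm in
lemma ell_step {d : ℕ} (f : Equiv.Perm (Fin d)) (x : Fin d) (hx : f x ≠ x) :
    ell (Equiv.swap x (f x) * f) = ell f + 1 := by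
  classical
  have hd : f.support.card ≤ d := by simpa using Finset.card_le_univ f.support
  by_cases hffx : f (f x) = x
  · -- the cycle of `x` is a 2-cycle
    set f' := Equiv.swap x (f x) * f with hf'
    have hfix : f' x = x := by
      simp [hf', Equiv.Perm.mul_apply, Equiv.swap_apply_right]
    have hfix2 : f' (f x) = f x := by
      simp [hf', Equiv.Perm.mul_apply, hffx, Equiv.swap_apply_left]
    have hdisj : Equiv.Perm.Disjoint (Equiv.swap x (f x)) f' := by
      intro y
      by_cases h1 : y = x
      · right; rw [h1, hfix]
      · by_cases h2 : y = f x
        · right; rw [h2, hfix2]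
        · left; exact Equiv.swap_apply_of_ne_of_ne h1 h2
    have hfeq : f = Equiv.swap x (f x) * f' := by
      rw [hf', ← mul_assoc, Equiv.swap_mul_self, one_mul]
    have hswct : (Equiv.swap x (f x)).cycleType = {2} := by
      rw [(Equiv.Perm.isCycle_swap (Ne.symm hx)).cycleType,
        Equiv.Perm.card_support_swap (Ne.symm hx)]
    have hct : f.cycleType = {2} + f'.cycleType := by
      rw [hfeq, hdisj.cycleType_mul, hswct]
    have hcard : Multiset.card f.cycleType = 1 + Multiset.card f'.cycleType := by
      rw [hct]; simp; omega
    have hsumf : f.cycleType.sum = f.support.card := f.sum_cycleType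
    have hsumf' : f'.cycleType.sum = f'.support.card := f'.sum_cycleType
    have hsum : f.cycleType.sum = 2 + f'.cycleType.sum := by rw [hct]; simp
    unfold ell
    omega
  · -- the cycle of `x` has length at least 3
    have hxs : x ∈ f.support := Equiv.Perm.mem_support.mpr hx
    set c := f.cycleOf x with hc
    have hcmem : c ∈ f.cycleFactorsFinset :=
      Equiv.Perm.cycleOf_mem_cycleFactorsFinset_iff.mpr hxs
    have hcx : c x = f x := Equiv.Perm.cycleOf_apply_self f x
    have hcfx : c (f x) = f (f x) := by
      rw [hc, Equiv.Perm.cycleOf_apply, if_pos ⟨1, by simp⟩]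
    have hcyc : c.IsCycle := Equiv.Perm.isCycle_cycleOf f hx
    set g := f * c⁻¹ with hg
    have hdisj : Equiv.Perm.Disjoint g c :=
      Equiv.Perm.disjoint_mul_inv_of_mem_cycleFactorsFinset hcmem
    have hfgc : f = g * c := by rw [hg, inv_mul_cancel_right]
    have hgx : g x = x := by
      rcases hdisj x with h | h
      · exact h
      · exact absurd h (by rw [hcx]; exact hx)
    have hgfx : g (f x) = f x := by
      rcases hdisj (f x) with h | h
      · exact h
      · exact absurd h (by rw [hcfx]; intro h'; exact hx (f.injective h'))
    have hcomm : Equiv.swap x (f x) * g = g * Equiv.swap x (f x) := by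
      have := Equiv.mul_swap_eq_swap_mul g x (f x)
      rw [hgx, hgfx] at this
      exact this.symm
    set c' := Equiv.swap x (c x) * c with hc'
    have hcc : c (c x) ≠ x := by rw [hcx, hcfx]; exact hffx
    have hc'cyc : c'.IsCycle := hcyc.swap_mul (by rw [hcx]; exact hx) hcc
    have hc'supp : c'.support = c.support \ {x} :=
      Equiv.Perm.support_swap_mul_eq c x hcc
    have hfact : Equiv.swap x (f x) * f = g * c' := by
      nth_rewrite 2 [hfgc]
      rw [← mul_assoc, hcomm, mul_assoc, hc', hcx]
    have hdisj' : g.Disjoint c' := by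
      intro y
      rcases hdisj y with h | h
      · exact Or.inl h
      · right
        have : y ∉ c'.support := by
          rw [hc'supp, Finset.mem_sdiff]
          intro hy
          exact (Equiv.Perm.mem_support.mp hy.1) h
        exact Equiv.Perm.notMem_support.mp this
    have hxc : x ∈ c.support := by rw [Equiv.Perm.mem_support, hcx]; exact hx
    have hk2 : 2 ≤ c.support.card := hcyc.two_le_card_support
    have hctf : f.cycleType = g.cycleType + {c.support.card} := by
      rw [hfgc, hdisj.cycleType_mul, hcyc.cycleType]
    have hc'card : c'.support.card = c.support.card - 1 := by
      rw [hc'supp, Finset.card_sdiff_of_subset (by simpa using hxc)]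
      simp
    have hctf' : (Equiv.swap x (f x) * f).cycleType
        = g.cycleType + {c.support.card - 1} := by
      rw [hfact, hdisj'.cycleType_mul, hc'cyc.cycleType, hc'card]
    have hcard : Multiset.card (Equiv.swap x (f x) * f).cycleType
        = Multiset.card f.cycleType := by
      rw [hctf, hctf']; simp
    have hs' : (Equiv.swap x (f x) * f).support = f.support \ {x} :=
      Equiv.Perm.support_swap_mul_eq f x hffx
    have hscard : (Equiv.swap x (f x) * f).support.card = f.support.card - 1 := by
      rw [hs', Finset.card_sdiff_of_subset (by simpa using hxs)]
      simp
    have hpos : 1 ≤ f.support.card := Finset.card_pos.mpr ⟨x, hxs⟩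
    unfold ell
    omega

open Equiv Equiv.Perm in
lemma last_facts {d : ℕ} (L : List (Fin d × Fin d)) (p : Fin d × Fin d)
    (hlt : ∀ q ∈ L ++ [p], q.1 < q.2)
    (hs : ((L ++ [p]).map Prod.snd).Pairwise (· < ·)) :
    ((L ++ [p]).map toSwap).prod⁻¹ p.2 = p.1 ∧
    (∀ y, ((L ++ [p]).map toSwap).prod y ≠ y → y ≤ p.2) ∧
    (L.map toSwap).prod = ((L ++ [p]).map toSwap).prod * Equiv.swap p.1 p.2 := by
  set P := (L.map toSwap).prod with hP
  have hprod : ((L ++ [p]).map toSwap).prod = P * Equiv.swap p.1 p.2 := by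
    rw [List.map_append, List.prod_append]
    simp [toSwap, hP]
  have hLlt : ∀ q ∈ L, q.1 < q.2 := fun q hq => hlt q (List.mem_append_left _ hq)
  have hlab : ∀ q ∈ L, q.2 < p.2 := by
    intro q hq
    rw [List.map_append] at hs
    have := (List.pairwise_append.mp hs).2.2 q.2
      (List.mem_map_of_mem (f := Prod.snd) hq) p.2 (by simp)
    exact this
  have hPp2 : P p.2 = p.2 := prod_fix_of_lt L hLlt p.2 hlab
  have hPinv : P⁻¹ p.2 = p.2 := Equiv.Perm.inv_eq_iff_eq.mpr hPp2.symm
  refine ⟨?_, ?_, ?_⟩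
  · rw [hprod, mul_inv_rev, Equiv.Perm.mul_apply, hPinv, Equiv.swap_inv,
      Equiv.swap_apply_right]
  · intro y hy
    by_contra hyy
    push_neg at hyy
    apply hy
    rw [hprod, Equiv.Perm.mul_apply,
      Equiv.swap_apply_of_ne_of_ne ((hlt p (by simp)).trans hyy).ne' hyy.ne']
    exact prod_fix_of_lt L hLlt y (fun q hq => (hlab q hq).trans hyy)
  · rw [hprod, mul_assoc, Equiv.swap_mul_self, mul_one]

open Equiv Equiv.Perm in
lemma id_case {d : ℕ} :
    ∃ l : List (Fin d × Fin d),
      (∀ p ∈ l, p.1 < p.2) ∧ (l.map Prod.snd).Pairwise (· < ·) ∧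
      (l.map toSwap).prod = (1 : Equiv.Perm (Fin d)) ∧
      (∀ p ∈ l, p.2 ∈ (1 : Equiv.Perm (Fin d)).support) ∧
      l.length + ell (1 : Equiv.Perm (Fin d)) = d ∧
      (∀ l' : List (Fin d × Fin d), (∀ p ∈ l', p.1 < p.2) →
        ((l'.map Prod.snd).Pairwise (· < ·)) →
        (l'.map toSwap).prod = (1 : Equiv.Perm (Fin d)) → l' = l) := by
  refine ⟨[], by simp, by simp, by simp, by simp, ?_, ?_⟩
  · simp [ell, Equiv.Perm.cycleType_one, Equiv.Perm.support_one]
  · intro l' h1 h2 h3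
    rcases l'.eq_nil_or_concat' with h | ⟨L, b, rfl⟩
    · exact h
    · exfalso
      obtain ⟨hinv, _, _⟩ := last_facts L b h1 h2
      rw [h3] at hinv
      simp only [inv_one, Equiv.Perm.one_apply] at hinv
      exact absurd hinv (h1 b (by simp)).ne'

open Equiv Equiv.Perm in
lemma main_lemma {d : ℕ} : ∀ (n : ℕ) (f : Equiv.Perm (Fin d)), f.support.card ≤ n →
    ∃ l : List (Fin d × Fin d),
      (∀ p ∈ l, p.1 < p.2) ∧ (l.map Prod.snd).Pairwise (· < ·) ∧
      (l.map toSwap).prod = f ∧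
      (∀ p ∈ l, p.2 ∈ f.support) ∧
      l.length + ell f = d ∧
      (∀ l' : List (Fin d × Fin d), (∀ p ∈ l', p.1 < p.2) →
        ((l'.map Prod.snd).Pairwise (· < ·)) → (l'.map toSwap).prod = f → l' = l) := by
  intro n
  induction n with
  | zero =>
    intro f hf
    have hf1 : f = 1 := by
      rwa [Nat.le_zero, Finset.card_eq_zero, Equiv.Perm.support_eq_empty_iff] at hf
    subst hf1
    exact id_case
  | succ n ih =>
    intro f hf
    by_cases hf1 : f = 1
    · subst hf1; exact id_case
    · have hne : f.support.Nonempty := by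
        rw [Finset.nonempty_iff_ne_empty]
        intro h
        exact hf1 (Equiv.Perm.support_eq_empty_iff.mp h)
      set j := f.support.max' hne with hj
      have hjs : j ∈ f.support := Finset.max'_mem _ _
      have hjmax : ∀ y ∈ f.support, y ≤ j := fun y hy => Finset.le_max' _ y hy
      have hfj : f j ≠ j := Equiv.Perm.mem_support.mp hjs
      set i := f⁻¹ j with hi
      have hfi : f i = j := by rw [hi]; simp
      have hinej : i ≠ j := fun h => hfj (h ▸ hfi)
      have his : i ∈ f.support := Equiv.Perm.mem_support.mpr
        (by rw [hfi]; exact Ne.symm hinej)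
      have hij : i < j := (hjmax i his).lt_of_ne hinej
      set g := f * Equiv.swap i j with hg
      have hkey : g = Equiv.swap j (f j) * f := by
        rw [hg, Equiv.mul_swap_eq_swap_mul, hfi]
      have hcard : g.support.card < f.support.card := by
        rw [hkey]; exact Equiv.Perm.card_support_swap_mul hfj
      have hells : ell g = ell f + 1 := by rw [hkey]; exact ell_step f j hfj
      have hgsupp : ∀ y ∈ g.support, y ∈ f.support ∧ y ≠ j := by
        intro y hy
        rw [hkey] at hy
        exact Equiv.Perm.mem_support_swap_mul_imp_mem_support_ne hy
      obtain ⟨lg, hlg1, hlg2, hlg3, hlg4, hlg5, hlg6⟩ := ih g (by omega)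
      have hlab : ∀ q ∈ lg, q.2 < j := by
        intro q hq
        have := hgsupp q.2 (hlg4 q hq)
        exact (hjmax q.2 this.1).lt_of_ne this.2
      refine ⟨lg ++ [(i, j)], ?_, ?_, ?_, ?_, ?_, ?_⟩
      · intro p hp
        rcases List.mem_append.mp hp with h | h
        · exact hlg1 p h
        · simp only [List.mem_singleton] at h
          subst h; exact hij
      · rw [List.map_append]
        refine List.pairwise_append.mpr ⟨hlg2, by simp, ?_⟩
        intro a ha b hb
        simp only [List.map_cons, List.map_nil, List.mem_singleton] at hb
        subst hb
        obtain ⟨q, hq, rfl⟩ := List.mem_map.mp ha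
        exact hlab q hq
      · rw [List.map_append, List.prod_append]
        simp only [List.map_cons, List.map_nil, List.prod_cons, List.prod_nil, mul_one]
        rw [hlg3]
        show g * toSwap (i, j) = f
        rw [hg, toSwap, mul_assoc, Equiv.swap_mul_self, mul_one]
      · intro p hp
        rcases List.mem_append.mp hp with h | h
        · exact (hgsupp p.2 (hlg4 p h)).1
        · simp only [List.mem_singleton] at h
          subst h; exact hjs
      · rw [List.length_append]
        simp only [List.length_singleton]
        omega
      · intro l' h1 h2 h3
        rcases l'.eq_nil_or_concat' with h | ⟨L, b, rfl⟩
        · exfalso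
          subst h
          simp only [List.map_nil, List.prod_nil] at h3
          exact hf1 h3.symm
        · obtain ⟨hinv, hbound, hrest⟩ := last_facts L b h1 h2
          rw [h3] at hinv hbound hrest
          have hb1b2 : b.1 < b.2 := h1 b (by simp)
          have hb2s : b.2 ∈ f.support := by
            rw [Equiv.Perm.mem_support]
            intro hfix
            have : f⁻¹ b.2 = b.2 := Equiv.Perm.inv_eq_iff_eq.mpr hfix.symm
            rw [hinv] at this
            exact hb1b2.ne this
          have hb2j : b.2 = j := le_antisymm (hjmax b.2 hb2s)
            (hbound j (Equiv.Perm.mem_support.mp hjs))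
          have hb1i : b.1 = i := by rw [hi, ← hb2j, hinv]
          have hLg : (L.map toSwap).prod = g := by
            rw [hrest, hb1i, hb2j, hg]
          have hLlt : ∀ q ∈ L, q.1 < q.2 := fun q hq =>
            h1 q (List.mem_append_left _ hq)
          have hLsorted : (L.map Prod.snd).Pairwise (· < ·) := by
            rw [List.map_append] at h2
            exact (List.pairwise_append.mp h2).1
          have hLeq : L = lg := hlg6 L hLlt hLsorted hLg
          rw [hLeq]
          congr 1
          rw [List.cons_eq_cons]
          exact ⟨Prod.ext hb1i hb2j, rfl⟩

/-- Jucys–Murphy correspondence, combinatorial form. Every `π ∈ S_d` admits a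
unique strictly monotone factorization into transpositions `(i_1 j_1)⋯(i_r j_r)` with `i_k < j_k`
and `j_1 < j_2 < ⋯ < j_r`; moreover the length of this factorization is the minimal one,
`|π| = d - ℓ(π)`. -/
theorem existsUnique_strictlyMonotoneFactorization (d : ℕ) (hd : 1 ≤ d)
    (π : Equiv.Perm (Fin d)) :
    (∃! l : List (Fin d × Fin d),
      (∀ p ∈ l, p.1 < p.2) ∧ (l.map Prod.snd).Pairwise (· < ·) ∧ (l.map toSwap).prod = π) ∧
    (∀ l : List (Fin d × Fin d),
      ((∀ p ∈ l, p.1 < p.2) ∧ (l.map Prod.snd).Pairwise (· < ·) ∧ (l.map toSwap).prod = π) →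
        l.length = d - ell π) := by
  obtain ⟨l, h1, h2, h3, _, h5, h6⟩ := main_lemma π.support.card π le_rfl
  constructor
  · exact ⟨l, ⟨h1, h2, h3⟩, fun y hy => h6 y hy.1 hy.2.1 hy.2.2⟩
  · intro l' hl'
    rw [h6 l' hl'.1 hl'.2.1 hl'.2.2]
    omega
end
end

section
/- Let d ≥ 1 and let ℂ[S_d] be the complex group algebra of the symmetric group S_d, with Jucys–Murphy elements J_1 = 0 and J_j = ∑_{i=1}^{j−1} (i j) for 2 ≤ j ≤ d. Then for every 0 ≤ r ≤ d−1, the sum in ℂ[S_d] of all permutations with exactly d − r cycles (counting fixed points) equals the elementary symmetric polynomial e_r evaluated at J_1, …, J_d; explicitly, ∑_{π : ℓ(π) = d−r} π = ∑_{2 ≤ j_1 < j_2 < ⋯ < j_r ≤ d} J_{j_1} J_{j_2} ⋯ J_{j_r}. -/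
noncomputable section

/-- The Jucys–Murphy elements of `ℂ[S_d]`: `J_j = (1 j) + (2 j) + ⋯ + (j-1 j)` (so `J_1 = 0`).
Here `j : Fin d` represents the point `j+1` of `{1,…,d}`. -/
def JM (d : ℕ) (j : Fin d) : MonoidAlgebra ℂ (Equiv.Perm (Fin d)) :=
  ∑ i ∈ Finset.univ.filter (fun i => i < j),
    MonoidAlgebra.of ℂ (Equiv.Perm (Fin d)) (Equiv.swap i j)

open Equiv Equiv.Perm Finset

variable {α : Type*} [Fintype α] [DecidableEq α]

/-- transposition count: sum of (cycle length - 1) over nontrivial cycles -/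
def cN (f : Perm α) : ℕ := f.cycleType.sum - f.cycleType.card

lemma card_le_sum_cycleType (f : Perm α) : Multiset.card f.cycleType ≤ f.cycleType.sum := by
  have := Multiset.card_nsmul_le_sum (s := f.cycleType) (a := 1)
    (fun x hx => le_trans one_le_two (Equiv.Perm.two_le_of_mem_cycleType hx))
  simpa using this

lemma two_card_le_sum_cycleType (f : Perm α) :
    2 * Multiset.card f.cycleType ≤ f.cycleType.sum := by
  have := Multiset.card_nsmul_le_sum (s := f.cycleType) (a := 2)
    (fun x hx => Equiv.Perm.two_le_of_mem_cycleType hx)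
  simpa [mul_comm] using this

lemma cN_one : cN (1 : Perm α) = 0 := by simp [cN]

lemma cN_eq_zero_iff (f : Perm α) : cN f = 0 ↔ f = 1 := by
  constructor
  · intro h
    have h2 := two_card_le_sum_cycleType f
    have h3 := card_le_sum_cycleType f
    have : Multiset.card f.cycleType = 0 := by unfold cN at h; omega
    rw [Multiset.card_eq_zero] at this
    exact Equiv.Perm.cycleType_eq_zero.mp this
  · rintro rfl; exact cN_one

lemma cN_mul_swap (π : Perm α) (m : α) (hm : π m ≠ m) :
    cN π = cN (π * Equiv.swap (π⁻¹ m) m) + 1 := by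
  set i := π⁻¹ m with hidef
  have hπi : π i = m := Equiv.apply_symm_apply π m
  have him : i ≠ m := fun h => hm (h ▸ hπi)
  set γ := π.cycleOf m with hγdef
  have hmemsupp : m ∈ π.support := mem_support.2 hm
  have hmem : γ ∈ π.cycleFactorsFinset :=
    Equiv.Perm.cycleOf_mem_cycleFactorsFinset_iff.mpr hmemsupp
  have hdisj : Equiv.Perm.Disjoint (π * γ⁻¹) γ :=
    Equiv.Perm.disjoint_mul_inv_of_mem_cycleFactorsFinset hmem
  set τ := π * γ⁻¹ with hτdef
  have hπfact : π = τ * γ := by rw [hτdef, inv_mul_cancel_right]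
  have hγ : IsCycle γ := Equiv.Perm.isCycle_cycleOf π hm
  have hγm : γ m = π m := Equiv.Perm.cycleOf_apply_self π m
  have hγmm : γ m ≠ m := by rw [hγm]; exact hm
  have hsc : π.SameCycle m i := ⟨-1, by simp [hidef]⟩
  have hγi : γ i = m := by rw [hγdef, hsc.cycleOf_apply, hπi]
  have hswap_eq : γ * Equiv.swap i m = Equiv.swap m (γ m) * γ := by
    rw [Equiv.mul_swap_eq_swap_mul, hγi]
  have hπswap : π * Equiv.swap i m = τ * (Equiv.swap m (γ m) * γ) := by
    rw [← hswap_eq, ← mul_assoc, ← hπfact]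
  have hτle := card_le_sum_cycleType τ
  have hγsum : γ.cycleType.sum = γ.support.card := Equiv.Perm.sum_cycleType γ
  have hγcard : Multiset.card γ.cycleType = 1 := by rw [hγ.cycleType]; rfl
  have hπct : π.cycleType = τ.cycleType + γ.cycleType := by
    rw [hπfact]; exact Equiv.Perm.Disjoint.cycleType_mul hdisj
  have hπsum : π.cycleType.sum = τ.cycleType.sum + γ.support.card := by
    rw [hπct, Multiset.sum_add, hγsum]
  have hπcard : Multiset.card π.cycleType = Multiset.card τ.cycleType + 1 := by
    rw [hπct, Multiset.card_add, hγcard]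
  have hk2 : 2 ≤ γ.support.card := hγ.two_le_card_support
  by_cases h2 : γ (γ m) = m
  · -- γ is a transposition
    have hγswap : γ = Equiv.swap m (γ m) := hγ.eq_swap_of_apply_apply_eq_self hγmm h2
    have hγinv : γ⁻¹ = γ := by rw [hγswap]; exact Equiv.swap_inv m (γ m)
    have hiγm : i = γ m := by
      have := congrArg (γ⁻¹ : Perm α) hγi
      simp only [show γ⁻¹ (γ i) = i from Equiv.symm_apply_apply γ i] at this
      rw [this, hγinv]
    have hswapim : Equiv.swap i m = γ := by rw [hiγm, Equiv.swap_comm, ← hγswap]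
    have hγγ : γ * γ = 1 := by
      calc γ * γ = γ * γ⁻¹ := by rw [hγinv]
      _ = 1 := mul_inv_cancel γ
    have hστ : π * Equiv.swap i m = τ := by
      rw [hswapim, hπfact, mul_assoc, hγγ, mul_one]
    have hkγ : γ.support.card = 2 := by
      rw [hγswap]; exact Equiv.Perm.card_support_swap hγmm.symm
    rw [hστ]
    unfold cN
    omega
  · -- the cycle γ has length ≥ 3
    set γ' := Equiv.swap m (γ m) * γ with hγ'def
    have hγ' : IsCycle γ' := hγ.swap_mul hγmm h2
    have hsupp : γ'.support = γ.support \ {m} := Equiv.Perm.support_swap_mul_eq γ m h2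
    have hγ'card1 : Multiset.card γ'.cycleType = 1 := by rw [hγ'.cycleType]; rfl
    have hmγ : m ∈ γ.support := mem_support.2 hγmm
    have hγ'suppcard : γ'.support.card = γ.support.card - 1 := by
      rw [hsupp, ← Finset.erase_eq, Finset.card_erase_of_mem hmγ]
    have hγ'sum : γ'.cycleType.sum = γ.support.card - 1 := by
      rw [Equiv.Perm.sum_cycleType, hγ'suppcard]
    have hdisj' : Equiv.Perm.Disjoint τ γ' := by
      intro x
      rcases hdisj x with h | h
      · exact Or.inl h
      · refine Or.inr (Equiv.Perm.notMem_support.1 fun hx => ?_)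
        rw [hsupp, Finset.mem_sdiff] at hx
        exact (Equiv.Perm.notMem_support.2 h) hx.1
    have hσct : (π * Equiv.swap i m).cycleType = τ.cycleType + γ'.cycleType := by
      rw [hπswap]; exact Equiv.Perm.Disjoint.cycleType_mul hdisj'
    have hσsum : (π * Equiv.swap i m).cycleType.sum
        = τ.cycleType.sum + (γ.support.card - 1) := by
      rw [hσct, Multiset.sum_add, hγ'sum]
    have hσcard : Multiset.card (π * Equiv.swap i m).cycleType
        = Multiset.card τ.cycleType + 1 := by
      rw [hσct, Multiset.card_add, hγ'card1]
    unfold cN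
    omega

lemma sort_insert_max {d : ℕ} (s : Finset (Fin d)) (m : Fin d)
    (hm : ∀ x ∈ s, x < m) (hms : m ∉ s) :
    (insert m s).sort (· ≤ ·) = s.sort (· ≤ ·) ++ [m] := by
  apply (fun hp h1 h2 => List.Perm.eq_of_pairwise' h1 h2 hp) ?_ (Finset.pairwise_sort _ _) ?_
  · refine (Finset.sort_perm_toList _ _).trans ?_
    refine (Finset.toList_insert hms).trans ?_
    refine (List.Perm.cons m (Finset.sort_perm_toList s ((· ≤ ·) : Fin d → Fin d → Prop)).symm).trans ?_
    exact (List.perm_append_singleton m _).symm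
  · refine List.pairwise_append.mpr ⟨Finset.pairwise_sort _ _, List.pairwise_singleton _ m, ?_⟩
    intro x hx y hy
    rw [List.mem_singleton] at hy
    subst hy
    exact (hm x ((Finset.mem_sort _).1 hx)).le

lemma main_ind (d : ℕ) (n : ℕ) : ∀ (r : ℕ), n ≤ d →
    ∑ π ∈ Finset.univ.filter
        (fun π : Perm (Fin d) => (∀ x, π x ≠ x → (x : ℕ) < n) ∧ cN π = r),
      MonoidAlgebra.of ℂ (Perm (Fin d)) π
    = ∑ s ∈ Finset.powersetCard r (Finset.univ.filter (fun x : Fin d => (x : ℕ) < n)),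
        ((s.sort (· ≤ ·)).map (JM d)).prod := by
  induction n with
  | zero =>
    intro r _
    have hFempty : (Finset.univ.filter (fun x : Fin d => (x : ℕ) < 0)) = ∅ := by
      simp
    rw [hFempty]
    have hone : ∀ π : Perm (Fin d), (∀ x, π x ≠ x → (x : ℕ) < 0) ↔ π = 1 := by
      intro π
      constructor
      · intro h
        ext x
        by_contra hx
        exact Nat.not_lt_zero _ (h x fun hh => hx (congrArg Fin.val hh))
      · rintro rfl x hx
        exact absurd rfl hx
    cases r with
    | zero =>
      have hset : Finset.univ.filter
          (fun π : Perm (Fin d) => (∀ x, π x ≠ x → (x : ℕ) < 0) ∧ cN π = 0) = {1} := by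
        ext π
        simp only [mem_filter, mem_univ, true_and, mem_singleton, hone]
        constructor
        · rintro ⟨h, _⟩; exact h
        · rintro rfl; exact ⟨rfl, cN_one⟩
      rw [hset, Finset.sum_singleton, Finset.powersetCard_zero, Finset.sum_singleton]
      simp [MonoidAlgebra.one_def]
    | succ r =>
      have hset : Finset.univ.filter
          (fun π : Perm (Fin d) => (∀ x, π x ≠ x → (x : ℕ) < 0) ∧ cN π = r + 1) = ∅ := by
        ext π
        simp only [mem_filter, mem_univ, true_and, notMem_empty, iff_false, not_and, hone]
        rintro rfl
        rw [cN_one]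
        omega
      rw [hset]
      rw [Finset.powersetCard_eq_empty.2 (by simp)]
      simp
  | succ n ih =>
    intro r hn1
    have hn : n ≤ d := Nat.le_of_succ_le hn1
    have hnd : n < d := hn1
    set m : Fin d := ⟨n, hnd⟩ with hmdef
    have hmval : (m : ℕ) = n := rfl
    -- split LHS by whether π fixes m
    rw [← Finset.sum_filter_add_sum_filter_not _ (fun π : Perm (Fin d) => π m = m)]
    -- part 1
    have hpart1 : (Finset.univ.filter
        (fun π : Perm (Fin d) => (∀ x, π x ≠ x → (x : ℕ) < n + 1) ∧ cN π = r)).filter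
          (fun π => π m = m)
        = Finset.univ.filter
            (fun π : Perm (Fin d) => (∀ x, π x ≠ x → (x : ℕ) < n) ∧ cN π = r) := by
      ext π
      simp only [mem_filter, mem_univ, true_and, and_assoc]
      constructor
      · rintro ⟨h1, h2, h3⟩
        refine ⟨fun x hx => ?_, h2⟩
        have hlt := h1 x hx
        have hxm : x ≠ m := by
          rintro rfl; exact hx h3
        have : (x : ℕ) ≠ n := fun hh => hxm (Fin.ext (hh.trans hmval.symm))
        omega
      · rintro ⟨h1, h2⟩
        refine ⟨fun x hx => Nat.lt_succ_of_lt (h1 x hx), h2, ?_⟩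
        by_contra hmm
        exact absurd (h1 m hmm) (by omega)
    rw [hpart1, ih r hn]
    -- RHS : insert m
    have hmnot : m ∉ Finset.univ.filter (fun x : Fin d => (x : ℕ) < n) := by
      simp [hmval]
    have hFsucc : (Finset.univ.filter (fun x : Fin d => (x : ℕ) < n + 1))
        = insert m (Finset.univ.filter (fun x : Fin d => (x : ℕ) < n)) := by
      ext x
      simp only [mem_filter, mem_univ, true_and, mem_insert]
      constructor
      · intro hx
        by_cases hxm : x = m
        · exact Or.inl hxm
        · refine Or.inr ?_
          have : (x : ℕ) ≠ n := fun hh => hxm (Fin.ext (hh.trans hmval.symm))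
          omega
      · rintro (rfl | hx)
        · omega
        · omega
    rw [hFsucc]
    cases r with
    | zero =>
      -- second part of LHS is empty, RHS powersetCard 0 ignores insert
      have hempty : (Finset.univ.filter
          (fun π : Perm (Fin d) => (∀ x, π x ≠ x → (x : ℕ) < n + 1) ∧ cN π = 0)).filter
            (fun π => ¬π m = m) = ∅ := by
        ext π
        simp only [mem_filter, mem_univ, true_and, notMem_empty, iff_false, not_and, and_imp]
        intro _ h2 hmm
        exact hmm ((cN_eq_zero_iff π).1 h2 ▸ rfl)
      rw [hempty, Finset.sum_empty, add_zero, Finset.powersetCard_zero,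
        Finset.powersetCard_zero]
    | succ r =>
      rw [Finset.powersetCard_succ_insert hmnot]
      have hdisjsets : Disjoint
          (Finset.powersetCard (r + 1) (Finset.univ.filter (fun x : Fin d => (x : ℕ) < n)))
          ((Finset.powersetCard r (Finset.univ.filter (fun x : Fin d => (x : ℕ) < n))).image
            (insert m)) := by
        rw [Finset.disjoint_left]
        intro a ha hb
        have hsub : a ⊆ Finset.univ.filter (fun x : Fin d => (x : ℕ) < n) :=
          (Finset.mem_powersetCard.1 ha).1
        obtain ⟨s', _, rfl⟩ := Finset.mem_image.1 hb
        exact hmnot (hsub (Finset.mem_insert_self m s'))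
      rw [Finset.sum_union hdisjsets]
      congr 1
      -- the bijection part
      have himg : ∑ s ∈ (Finset.powersetCard r
            (Finset.univ.filter (fun x : Fin d => (x : ℕ) < n))).image (insert m),
          ((s.sort (· ≤ ·)).map (JM d)).prod
          = ∑ s ∈ Finset.powersetCard r
              (Finset.univ.filter (fun x : Fin d => (x : ℕ) < n)),
            (((s.sort (· ≤ ·)).map (JM d)).prod) * JM d m := by
        rw [Finset.sum_image]
        · apply Finset.sum_congr rfl
          intro s hs
          have hsub : s ⊆ Finset.univ.filter (fun x : Fin d => (x : ℕ) < n) :=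
            (Finset.mem_powersetCard.1 hs).1
          have hlt : ∀ x ∈ s, x < m := by
            intro x hx
            have := (Finset.mem_filter.1 (hsub hx)).2
            rw [Fin.lt_def, hmval]
            exact this
          have hms : m ∉ s := fun hh => lt_irrefl m (hlt m hh)
          rw [sort_insert_max s m hlt hms, List.map_append, List.prod_append]
          simp
        · intro a ha b hb hab
          have hma : m ∉ a := fun hh =>
            hmnot ((Finset.mem_powersetCard.1 ha).1 hh)
          have hmb : m ∉ b := fun hh =>
            hmnot ((Finset.mem_powersetCard.1 hb).1 hh)
          rw [← Finset.erase_insert hma, ← Finset.erase_insert hmb, hab]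
      rw [himg, ← Finset.sum_mul, ← ih r hn]
      -- now the permutation bijection
      rw [Finset.sum_mul]
      have hJM : JM d m = ∑ i ∈ Finset.univ.filter (fun x : Fin d => (x : ℕ) < n),
          MonoidAlgebra.of ℂ (Perm (Fin d)) (Equiv.swap i m) := by
        unfold JM
        apply Finset.sum_congr
        · ext x
          simp [Fin.lt_def, hmval]
        · intros
          rfl
      rw [hJM]
      have hRHS : ∀ σ ∈ Finset.univ.filter
          (fun σ : Perm (Fin d) => (∀ x, σ x ≠ x → (x : ℕ) < n) ∧ cN σ = r),
          MonoidAlgebra.of ℂ (Perm (Fin d)) σ *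
            ∑ i ∈ Finset.univ.filter (fun x : Fin d => (x : ℕ) < n),
              MonoidAlgebra.of ℂ (Perm (Fin d)) (Equiv.swap i m)
          = ∑ i ∈ Finset.univ.filter (fun x : Fin d => (x : ℕ) < n),
              MonoidAlgebra.of ℂ (Perm (Fin d)) (σ * Equiv.swap i m) := by
        intro σ _
        rw [Finset.mul_sum]
        exact Finset.sum_congr rfl fun i _ => (map_mul _ _ _).symm
      rw [Finset.sum_congr rfl hRHS, ← Finset.sum_product']
      -- bijection between filtered perms and pairs
      apply Finset.sum_nbij'
        (i := fun π => (π * Equiv.swap (π⁻¹ m) m, π⁻¹ m))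
        (j := fun p => p.1 * Equiv.swap p.2 m)
      · -- hi : forward map lands in product set
        intro π hπ
        simp only [mem_filter, mem_univ, true_and] at hπ
        obtain ⟨⟨h1, h2⟩, h3⟩ := hπ
        have hm : π m ≠ m := h3
        have hπi : π (π⁻¹ m) = m := Equiv.apply_symm_apply π m
        have him : π⁻¹ m ≠ m := by
          intro h
          apply hm
          nth_rewrite 1 [← h]
          exact hπi
        have hiltn : ((π⁻¹ m : Fin d) : ℕ) < n := by
          have hisupp : π (π⁻¹ m) ≠ π⁻¹ m := by rw [hπi]; exact (Ne.symm him)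
          have := h1 _ hisupp
          have : ((π⁻¹ m : Fin d) : ℕ) ≠ n := fun hh => him (Fin.ext (hh.trans hmval.symm))
          omega
        have hkey := cN_mul_swap π m hm
        simp only [Finset.mem_product, mem_filter, mem_univ, true_and]
        refine ⟨⟨fun x hx => ?_, by omega⟩, hiltn⟩
        -- support of σ := π * swap (π⁻¹ m) m inside range n
        by_cases hxm : x = m
        · subst hxm
          exfalso
          apply hx
          simp [Equiv.Perm.mul_apply, Equiv.swap_apply_right]
        by_cases hxi : x = π⁻¹ m
        · subst hxi; exact hiltn
        · have : (π * Equiv.swap (π⁻¹ m) m) x = π x := by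
            rw [Equiv.Perm.mul_apply, Equiv.swap_apply_of_ne_of_ne hxi hxm]
          rw [this] at hx
          have := h1 x hx
          have : (x : ℕ) ≠ n := fun hh => hxm (Fin.ext (hh.trans hmval.symm))
          omega
      · -- hj : backward map lands in filtered set
        intro p hp
        simp only [Finset.mem_product, mem_filter, mem_univ, true_and] at hp
        obtain ⟨⟨h1, h2⟩, h3⟩ := hp
        obtain ⟨σ, i⟩ := p
        simp only at h1 h2 h3 ⊢
        have him : i ≠ m := fun h => by rw [h, hmval] at h3; omega
        have hσm : σ m = m := by
          by_contra hh
          have := h1 m hh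
          omega
        have hσinv : σ⁻¹ m = m := by rw [Equiv.Perm.inv_eq_iff_eq]; exact hσm.symm
        have hσi : σ i ≠ m := fun h => him (by
          rw [← hσinv, ← h, show σ⁻¹ (σ i) = i from Equiv.symm_apply_apply σ i])
        have hπm : (σ * Equiv.swap i m) m = σ i := by
          simp [Equiv.Perm.mul_apply, Equiv.swap_apply_right]
        have hπmm : (σ * Equiv.swap i m) m ≠ m := by rw [hπm]; exact hσi
        have hinv : (σ * Equiv.swap i m)⁻¹ m = i := by
          rw [mul_inv_rev, Equiv.Perm.mul_apply, Equiv.swap_inv, hσinv,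
            Equiv.swap_apply_right]
        have hkey := cN_mul_swap (σ * Equiv.swap i m) m hπmm
        rw [hinv] at hkey
        have hback : σ * Equiv.swap i m * Equiv.swap i m = σ := by
          rw [mul_assoc, Equiv.swap_mul_self, mul_one]
        rw [hback] at hkey
        simp only [mem_filter, mem_univ, true_and]
        refine ⟨⟨fun x hx => ?_, by omega⟩, hπmm⟩
        by_cases hxm : x = m
        · subst hxm; omega
        by_cases hxi : x = i
        · subst hxi; exact Nat.lt_succ_of_lt h3
        · have : (σ * Equiv.swap i m) x = σ x := by
            simp [Equiv.Perm.mul_apply, Equiv.swap_apply_of_ne_of_ne hxi hxm]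
          rw [this] at hx
          exact Nat.lt_succ_of_lt (h1 x hx)
      · -- left inverse
        intro π hπ
        simp only
        rw [mul_assoc, Equiv.swap_mul_self, mul_one]
      · -- right inverse
        intro p hp
        simp only [Finset.mem_product, mem_filter, mem_univ, true_and] at hp
        obtain ⟨⟨h1, h2⟩, h3⟩ := hp
        obtain ⟨σ, i⟩ := p
        simp only at h1 h2 h3 ⊢
        have him : i ≠ m := fun h => by rw [h, hmval] at h3; omega
        have hσm : σ m = m := by
          by_contra hh
          have := h1 m hh
          omega
        have hσinv : σ⁻¹ m = m := by rw [Equiv.Perm.inv_eq_iff_eq]; exact hσm.symm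
        have hinv : (σ * Equiv.swap i m)⁻¹ m = i := by
          rw [mul_inv_rev, Equiv.Perm.mul_apply, Equiv.swap_inv, hσinv,
            Equiv.swap_apply_right]
        rw [hinv, mul_assoc, Equiv.swap_mul_self, mul_one]
      · -- summand equality
        intro π hπ
        simp only
        rw [mul_assoc, Equiv.swap_mul_self, mul_one]


/-- Jucys–Murphy correspondence, polynomial form. For `0 ≤ r ≤ d-1`, the sum in
`ℂ[S_d]` of all permutations with exactly `d - r` cycles (counting fixed points) equals the
elementary symmetric polynomial `e_r` evaluated at the Jucys–Murphy elements:
`∑_{ℓ(π) = d-r} π = ∑_{j_1 < ⋯ < j_r} J_{j_1} ⋯ J_{j_r}`. -/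
theorem level_eq_esymm_JM (d : ℕ) (hd : 1 ≤ d) (r : ℕ) (hr : r ≤ d - 1) :
    ∑ π ∈ Finset.univ.filter (fun π : Equiv.Perm (Fin d) => ell π = d - r),
        MonoidAlgebra.of ℂ (Equiv.Perm (Fin d)) π =
      ∑ s ∈ Finset.powersetCard r (Finset.univ : Finset (Fin d)),
        ((s.sort (· ≤ ·)).map (JM d)).prod := by
  have h := main_ind d d r le_rfl
  have hF : (Finset.univ.filter (fun x : Fin d => (x : ℕ) < d)) = Finset.univ :=
    Finset.filter_true_of_mem fun x _ => x.isLt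
  rw [hF] at h
  rw [← h]
  apply Finset.sum_congr _ fun _ _ => rfl
  apply Finset.filter_congr
  intro π _
  have h1 : π.cycleType.sum = π.support.card := Equiv.Perm.sum_cycleType π
  have h2 : π.support.card ≤ d := by
    simpa using Finset.card_le_univ π.support
  have h3 := card_le_sum_cycleType π
  simp only [ell, cN, eq_iff_iff]
  constructor
  · intro hh
    exact ⟨fun x _ => x.isLt, by omega⟩
  · rintro ⟨_, hh⟩
    omega
end
end

section
/- Let d ≥ 1 and let ℂ[S_d] be the complex group algebra of S_d with Jucys–Murphy elements J_1 = 0 and J_j = ∑_{i=1}^{j−1} (i j). Then for every scalar q, the exponential distance element ∑_{π ∈ S_d} q^{d − ℓ(π)} π equals the product (1 + qJ_1)(1 + qJ_2)⋯(1 + qJ_d) in ℂ[S_d]. -/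
noncomputable section

namespace JMaux

open Equiv Equiv.Perm Finset

variable {α : Type*} [DecidableEq α] [Fintype α]

lemma sameCycle_pow {c : Perm α} (hc : c.IsCycle) {a i : α} (ha : c a = a) (hi : c i ≠ i)
    (k : ℕ) : (c * Equiv.swap i a).SameCycle a ((c ^ k) i) := by
  have hia : i ≠ a := fun h => hi (by rw [h]; exact ha)
  have hanot : a ∉ c.support := by simp [ha]
  induction k with
  | zero =>
    refine ⟨-1, ?_⟩
    simp only [zpow_neg, zpow_one, pow_zero, one_apply]
    rw [mul_inv_rev, Equiv.Perm.mul_apply]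
    have : c⁻¹ a = a := by rw [inv_eq_iff_eq]; exact ha.symm
    rw [this, Equiv.swap_inv, Equiv.swap_apply_right]
  | succ k ih =>
    by_cases h : (c ^ k) i = i
    · have : (c ^ (k + 1)) i = (c * Equiv.swap i a) a := by
        rw [pow_succ', Equiv.Perm.mul_apply, h, Equiv.Perm.mul_apply,
          Equiv.swap_apply_right]
      exact this ▸ ⟨1, by simp⟩
    · have hmem : (c ^ k) i ∈ c.support := by
        rw [Equiv.Perm.pow_apply_mem_support, Equiv.Perm.mem_support]; exact hi
      have hne_a : (c ^ k) i ≠ a := fun hh => hanot (hh ▸ hmem)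
      have : (c * Equiv.swap i a) ((c ^ k) i) = (c ^ (k + 1)) i := by
        rw [Equiv.Perm.mul_apply, Equiv.swap_apply_of_ne_of_ne h hne_a,
          ← Equiv.Perm.mul_apply, ← pow_succ']
      exact ih.trans ⟨1, by simpa using this⟩

lemma isCycle_insert {c : Perm α} (hc : c.IsCycle) {a i : α} (ha : c a = a) (hi : c i ≠ i) :
    (c * Equiv.swap i a).IsCycle := by
  have hia : i ≠ a := fun h => hi (by rw [h]; exact ha)
  have hanot : a ∉ c.support := by simp [ha]
  have hcia : c i ≠ a := by
    intro h
    exact hanot (h ▸ (Equiv.Perm.apply_mem_support.2 (Equiv.Perm.mem_support.2 hi)))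
  have hmove : (c * Equiv.swap i a) a ≠ a := by
    rw [Equiv.Perm.mul_apply, Equiv.swap_apply_right]; exact hcia
  refine ⟨a, hmove, fun y hy => ?_⟩
  by_cases hya : y = a
  · exact hya ▸ Equiv.Perm.SameCycle.refl _ _
  by_cases hyi : y = i
  · subst hyi
    simpa using sameCycle_pow hc ha hi 0
  · have hcy : c y ≠ y := by
      intro h
      apply hy
      rw [Equiv.Perm.mul_apply, Equiv.swap_apply_of_ne_of_ne hyi hya, h]
    obtain ⟨k, hk⟩ := hc.exists_pow_eq hi hcy
    exact hk ▸ sameCycle_pow hc ha hi k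

lemma support_insert {c : Perm α} {a i : α} (ha : c a = a) (hi : c i ≠ i) :
    (c * Equiv.swap i a).support = insert a c.support := by
  have hia : i ≠ a := fun h => hi (by rw [h]; exact ha)
  have hanot : a ∉ c.support := by simp [ha]
  have hcia : c i ≠ a := by
    intro h
    exact hanot (h ▸ (Equiv.Perm.apply_mem_support.2 (Equiv.Perm.mem_support.2 hi)))
  ext x
  simp only [Equiv.Perm.mem_support, Finset.mem_insert, Equiv.Perm.mul_apply]
  rcases eq_or_ne x a with rfl | hxa
  · simp [Equiv.swap_apply_right, hcia]
  rcases eq_or_ne x i with rfl | hxi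
  · simp [Equiv.swap_apply_left, ha, hi, Ne.symm hia]
  · simp [Equiv.swap_apply_of_ne_of_ne hxi hxa, hxa]

/-- Merging a fixed point `a` into a permutation by multiplying with `swap i a`. -/
lemma merge_count {τ : Perm α} {a i : α} (ha : τ a = a) (hia : i ≠ a) :
    (τ * Equiv.swap i a).support.card + τ.cycleType.card =
      τ.support.card + (τ * Equiv.swap i a).cycleType.card + 1 := by
  have hanot : a ∉ τ.support := by simp [ha]
  by_cases hfix : τ i = i
  · -- `swap i a` is disjoint from `τ`
    have hd : Equiv.Perm.Disjoint τ (Equiv.swap i a) := by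
      intro x
      rcases eq_or_ne x i with rfl | hxi
      · exact Or.inl hfix
      rcases eq_or_ne x a with rfl | hxa
      · exact Or.inl ha
      · exact Or.inr (Equiv.swap_apply_of_ne_of_ne hxi hxa)
    have hsupp : (τ * Equiv.swap i a).support = τ.support ∪ {i, a} := by
      rw [hd.support_mul, Equiv.Perm.support_swap hia]
    have hdisj : _root_.Disjoint τ.support ({i, a} : Finset α) := by
      rw [← Equiv.Perm.support_swap hia]
      exact hd.disjoint_support
    have hcard : (τ * Equiv.swap i a).support.card = τ.support.card + 2 := by
      rw [hsupp, Finset.card_union_of_disjoint hdisj, Finset.card_insert_of_notMem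
        (by simpa using hia), Finset.card_singleton]
    have hct : (τ * Equiv.swap i a).cycleType = τ.cycleType + {2} := by
      rw [hd.cycleType_mul, (Equiv.Perm.isCycle_swap hia).cycleType,
        Equiv.Perm.card_support_swap hia]
    rw [hcard, hct]
    simp [Multiset.card_add]
    omega
  · -- `i` is moved by `τ`: split off the cycle of `i`
    set c := τ.cycleOf i with hc_def
    have hc_mem : c ∈ τ.cycleFactorsFinset :=
      Equiv.Perm.cycleOf_mem_cycleFactorsFinset_iff.2 (Equiv.Perm.mem_support.2 hfix)
    have hcc : c.IsCycle := (Equiv.Perm.mem_cycleFactorsFinset_iff.mp hc_mem).1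
    have hρd : Equiv.Perm.Disjoint (τ * c⁻¹) c :=
      Equiv.Perm.disjoint_mul_inv_of_mem_cycleFactorsFinset hc_mem
    set ρ := τ * c⁻¹ with hρ_def
    have hτ_eq : τ = ρ * c := by rw [hρ_def, inv_mul_cancel_right]
    have hcsupp : c.support ⊆ τ.support := Equiv.Perm.support_cycleOf_le τ i
    have hca : c a = a := by
      have : a ∉ c.support := fun h => hanot (hcsupp h)
      exact Equiv.Perm.notMem_support.mp this
    have hci : c i ≠ i := by
      rw [hc_def, Equiv.Perm.cycleOf_apply_self]; exact hfix
    have hρi : ρ i = i := (hρd i).resolve_right hci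
    have hρa : ρ a = a := by
      rw [hρ_def, Equiv.Perm.mul_apply, ← hca, (show c⁻¹ (c a) = a from Equiv.symm_apply_apply c a), hca, ha]
    -- ρ commutes with swap i a
    have hρsw : Equiv.Perm.Disjoint ρ (Equiv.swap i a) := by
      intro x
      rcases eq_or_ne x i with rfl | hxi
      · exact Or.inl hρi
      rcases eq_or_ne x a with rfl | hxa
      · exact Or.inl hρa
      · exact Or.inr (Equiv.swap_apply_of_ne_of_ne hxi hxa)
    set c' := c * Equiv.swap i a with hc'_def
    have hπ_eq : τ * Equiv.swap i a = ρ * c' := by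
      rw [hτ_eq, hc'_def, mul_assoc]
    have hc'supp : c'.support = insert a c.support := support_insert hca hci
    have hc'cyc : c'.IsCycle := isCycle_insert hcc hca hci
    have hρc' : Equiv.Perm.Disjoint ρ c' := by
      intro x
      rcases eq_or_ne x i with rfl | hxi
      · exact Or.inl hρi
      rcases eq_or_ne x a with rfl | hxa
      · exact Or.inl hρa
      · rcases hρd x with h | h
        · exact Or.inl h
        · refine Or.inr ?_
          rw [hc'_def, Equiv.Perm.mul_apply, Equiv.swap_apply_of_ne_of_ne hxi hxa, h]
    have hanotc : a ∉ c.support := fun h => hanot (hcsupp h)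
    have hcardc' : c'.support.card = c.support.card + 1 := by
      rw [hc'supp, Finset.card_insert_of_notMem hanotc]
    -- cycle types
    have hctτ : τ.cycleType = ρ.cycleType + {c.support.card} := by
      rw [hτ_eq, hρd.cycleType_mul, hcc.cycleType]
    have hctπ : (τ * Equiv.swap i a).cycleType = ρ.cycleType + {c'.support.card} := by
      rw [hπ_eq, hρc'.cycleType_mul, hc'cyc.cycleType]
    -- supports
    have hsτ : τ.support = ρ.support ∪ c.support := by rw [hτ_eq, hρd.support_mul]
    have hsπ : (τ * Equiv.swap i a).support = ρ.support ∪ c'.support := by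
      rw [hπ_eq, hρc'.support_mul]
    have hd1 : _root_.Disjoint ρ.support c.support := hρd.disjoint_support
    have hd2 : _root_.Disjoint ρ.support c'.support := hρc'.disjoint_support
    have h1 : τ.support.card = ρ.support.card + c.support.card := by
      rw [hsτ, Finset.card_union_of_disjoint hd1]
    have h2 : (τ * Equiv.swap i a).support.card = ρ.support.card + c.support.card + 1 := by
      rw [hsπ, Finset.card_union_of_disjoint hd2, hcardc']; omega
    rw [h1, h2, hctτ, hctπ]
    simp only [Multiset.card_add, Multiset.card_singleton]
    omega

lemma two_mul_card_cycleType_le (π : Perm α) :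
    2 * π.cycleType.card ≤ π.support.card := by
  have h : Multiset.card π.cycleType • 2 ≤ π.cycleType.sum :=
    Multiset.card_nsmul_le_sum (fun x hx => Equiv.Perm.two_le_of_mem_cycleType hx)
  rw [Equiv.Perm.sum_cycleType] at h
  rw [smul_eq_mul, mul_comm] at h
  exact h

end JMaux

namespace JMaux

open Equiv Equiv.Perm Finset

/-- The canonical embedding `Fin d ≃ {x : Fin (d+1) // x.val < d}`. -/
def fe (d : ℕ) : Fin d ≃ {x : Fin (d + 1) // x.val < d} where
  toFun i := ⟨⟨i.1, Nat.lt_succ_of_lt i.2⟩, i.2⟩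
  invFun x := ⟨x.1.1, x.2⟩
  left_inv i := rfl
  right_inv x := rfl

/-- The embedding `S_d →* S_{d+1}` fixing the last point. -/
def E (d : ℕ) : Perm (Fin d) →* Perm (Fin (d + 1)) :=
  Equiv.Perm.extendDomainHom (fe d)

lemma E_apply_castSucc (d : ℕ) (σ : Perm (Fin d)) (i : Fin d) :
    E d σ i.castSucc = (σ i).castSucc := by
  have h : (i.castSucc : Fin (d + 1)).val < d := i.2
  show σ.extendDomain (fe d) i.castSucc = (σ i).castSucc
  exact Equiv.Perm.extendDomain_apply_subtype σ (fe d) h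

lemma E_apply_last (d : ℕ) (σ : Perm (Fin d)) : E d σ (Fin.last d) = Fin.last d := by
  show σ.extendDomain (fe d) (Fin.last d) = _
  exact Equiv.Perm.extendDomain_apply_not_subtype _ _ (lt_irrefl d)

lemma E_injective (d : ℕ) : Function.Injective (E d) :=
  Equiv.Perm.extendDomainHom_injective (fe d)

lemma E_card_support (d : ℕ) (σ : Perm (Fin d)) :
    (E d σ).support.card = σ.support.card :=
  Equiv.Perm.card_support_extend_domain (fe d)

lemma E_cycleType (d : ℕ) (σ : Perm (Fin d)) : (E d σ).cycleType = σ.cycleType :=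
  Equiv.Perm.cycleType_extendDomain (fe d)

lemma E_swap (d : ℕ) (i j : Fin d) :
    E d (Equiv.swap i j) = Equiv.swap i.castSucc j.castSucc := by
  ext x
  induction x using Fin.lastCases with
  | last =>
    rw [E_apply_last, Equiv.swap_apply_of_ne_of_ne (Fin.castSucc_lt_last i).ne'
      (Fin.castSucc_lt_last j).ne']
  | cast y =>
    rw [E_apply_castSucc, Function.Injective.swap_apply (Fin.castSucc_injective d)]

lemma card_support_le {d : ℕ} (σ : Perm (Fin d)) : σ.support.card ≤ d := by
  simpa using Finset.card_le_univ σ.support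

lemma ell_le {d : ℕ} (σ : Perm (Fin d)) : ell σ ≤ d := by
  have h1 := two_mul_card_cycleType_le σ
  have h2 := card_support_le σ
  unfold ell
  omega

/-- Key counting lemma for the inductive step. -/
lemma key (d : ℕ) (σ : Perm (Fin d)) (i : Fin (d + 1)) :
    (d + 1) - ell (E d σ * Equiv.swap i (Fin.last d)) =
      (d - ell σ) + (if i = Fin.last d then 0 else 1) := by
  have hsup := E_card_support d σ
  have hct := E_cycleType d σ
  have hs2 := card_support_le σ
  have hc2 := two_mul_card_cycleType_le σ
  by_cases hi : i = Fin.last d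
  · subst hi
    rw [Equiv.swap_self, show (Equiv.refl (Fin (d+1)) : Perm (Fin (d+1))) = 1 from rfl,
      mul_one]
    rw [if_pos rfl]
    unfold ell
    rw [hsup, hct]
    omega
  · have ha : E d σ (Fin.last d) = Fin.last d := E_apply_last d σ
    have hmerge := merge_count (τ := E d σ) (a := Fin.last d) (i := i) ha hi
    have hπs := card_support_le (E d σ * Equiv.swap i (Fin.last d))
    have hπc := two_mul_card_cycleType_le (E d σ * Equiv.swap i (Fin.last d))
    rw [hsup, hct] at hmerge
    simp only [if_neg hi]
    unfold ell
    omega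

/-- The decomposition map `(σ, i) ↦ E σ * (i, last)` is a bijection. -/
lemma phi_bijective (d : ℕ) :
    Function.Bijective (fun p : Perm (Fin d) × Fin (d + 1) =>
      E d p.1 * Equiv.swap p.2 (Fin.last d)) := by
  rw [Fintype.bijective_iff_injective_and_card]
  constructor
  · intro p q h
    have hlast : ∀ (σ : Perm (Fin d)) (i : Fin (d + 1)),
        (E d σ * Equiv.swap i (Fin.last d))⁻¹ (Fin.last d) = i := by
      intro σ i
      rw [mul_inv_rev, Equiv.Perm.mul_apply]
      have : (E d σ)⁻¹ (Fin.last d) = Fin.last d := by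
        rw [← map_inv, E_apply_last]
      rw [this, Equiv.swap_inv, Equiv.swap_apply_right]
    have h' : (E d) p.1 * Equiv.swap p.2 (Fin.last d) =
        (E d) q.1 * Equiv.swap q.2 (Fin.last d) := h
    have h2 : p.2 = q.2 := by
      rw [← hlast p.1 p.2, ← hlast q.1 q.2, h']
    have h1 : p.1 = q.1 := by
      apply E_injective d
      rw [h2] at h'
      exact mul_right_cancel h'
    exact Prod.ext h1 h2
  · rw [Fintype.card_prod, Fintype.card_perm, Fintype.card_perm, Fintype.card_fin,
      Fintype.card_fin, Nat.factorial_succ, mul_comm]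

/-- The algebra map `ℂ[S_d] → ℂ[S_{d+1}]` induced by `E`. -/
def A (d : ℕ) : MonoidAlgebra ℂ (Perm (Fin d)) →ₐ[ℂ] MonoidAlgebra ℂ (Perm (Fin (d + 1))) :=
  MonoidAlgebra.mapDomainAlgHom ℂ ℂ (E d)

lemma A_of (d : ℕ) (σ : Perm (Fin d)) :
    A d (MonoidAlgebra.of ℂ (Perm (Fin d)) σ) =
      MonoidAlgebra.of ℂ (Perm (Fin (d + 1))) (E d σ) := by
  simp [A, MonoidAlgebra.of_apply, Finsupp.mapDomain_single]

lemma A_JM (d : ℕ) (j : Fin d) : A d (JM d j) = JM (d + 1) j.castSucc := by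
  unfold JM
  rw [map_sum]
  refine Finset.sum_bij' (fun i _ => i.castSucc)
    (fun i' hi' => i'.castPred ?_) ?_ ?_ ?_ ?_ ?_
  · intro hlast
    rw [Finset.mem_filter] at hi'
    exact absurd hlast (Fin.ne_last_of_lt (lt_of_lt_of_le hi'.2 (Fin.le_last _)))
  · intro i hi
    rw [Finset.mem_filter] at hi ⊢
    exact ⟨Finset.mem_univ _, Fin.castSucc_lt_castSucc_iff.mpr hi.2⟩
  · intro i' hi'
    rw [Finset.mem_filter] at hi' ⊢
    refine ⟨Finset.mem_univ _, ?_⟩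
    rw [← Fin.castSucc_lt_castSucc_iff, Fin.castSucc_castPred]
    exact hi'.2
  · intro i hi
    exact Fin.castPred_castSucc _
  · intro i' hi'
    exact Fin.castSucc_castPred _ _
  · intro i hi
    rw [A_of, E_swap]

theorem main (d : ℕ) (q : ℂ) :
    ∑ π : Equiv.Perm (Fin d),
        q ^ (d - ell π) • MonoidAlgebra.of ℂ (Equiv.Perm (Fin d)) π =
      (List.ofFn (fun j : Fin d => 1 + q • JM d j)).prod := by
  induction d with
  | zero =>
    have huniv : (Finset.univ : Finset (Perm (Fin 0))) = {1} := by
      apply Finset.eq_singleton_iff_unique_mem.mpr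
      refine ⟨Finset.mem_univ _, fun x _ => ?_⟩
      ext i
      exact i.elim0
    rw [huniv, Finset.sum_singleton]
    have hell : ell (1 : Perm (Fin 0)) = 0 := by
      unfold ell
      simp
    rw [hell]
    simp [MonoidAlgebra.one_def]
  | succ d IH =>
    -- reindex the sum by the bijection (σ, i) ↦ E σ * swap i last
    rw [← Fintype.sum_bijective _ (phi_bijective d)
      (fun p : Perm (Fin d) × Fin (d + 1) =>
        q ^ ((d + 1) - ell (E d p.1 * Equiv.swap p.2 (Fin.last d))) •
          MonoidAlgebra.of ℂ (Perm (Fin (d + 1))) (E d p.1 * Equiv.swap p.2 (Fin.last d)))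
      _ (fun p => rfl)]
    have hsplit : ∀ p : Perm (Fin d) × Fin (d + 1),
        q ^ ((d + 1) - ell (E d p.1 * Equiv.swap p.2 (Fin.last d))) •
            MonoidAlgebra.of ℂ (Perm (Fin (d + 1))) (E d p.1 * Equiv.swap p.2 (Fin.last d)) =
          (q ^ (d - ell p.1) • MonoidAlgebra.of ℂ (Perm (Fin (d + 1))) (E d p.1)) *
            (q ^ (if p.2 = Fin.last d then 0 else 1) •
              MonoidAlgebra.of ℂ (Perm (Fin (d + 1))) (Equiv.swap p.2 (Fin.last d))) := by
      intro p
      rw [key d p.1 p.2, pow_add, map_mul, smul_mul_smul_comm]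
    rw [Finset.sum_congr rfl (fun p _ => hsplit p)]
    simp only [Fintype.sum_prod_type]
    have hprod := Fintype.sum_mul_sum
      (fun σ : Perm (Fin d) => q ^ (d - ell σ) •
        MonoidAlgebra.of ℂ (Perm (Fin (d + 1))) (E d σ))
      (fun i : Fin (d + 1) => q ^ (if i = Fin.last d then 0 else 1) •
        MonoidAlgebra.of ℂ (Perm (Fin (d + 1))) (Equiv.swap i (Fin.last d)))
    rw [← hprod]
    -- identify the two factors
    have hfac2 : (∑ i : Fin (d + 1), q ^ (if i = Fin.last d then 0 else 1) •
        MonoidAlgebra.of ℂ (Perm (Fin (d + 1))) (Equiv.swap i (Fin.last d))) =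
        1 + q • JM (d + 1) (Fin.last d) := by
      rw [← Finset.add_sum_erase _ _ (Finset.mem_univ (Fin.last d))]
      congr 1
      · rw [if_pos rfl, pow_zero, one_smul, Equiv.swap_self]
        rw [show (Equiv.refl (Fin (d+1)) : Perm (Fin (d+1))) = 1 from rfl, map_one]
      · have hfilter : Finset.univ.filter (fun i : Fin (d + 1) => i < Fin.last d) =
            Finset.univ.erase (Fin.last d) := by
          ext x
          simp [Fin.lt_last_iff_ne_last]
        unfold JM
        rw [hfilter, Finset.smul_sum]
        refine Finset.sum_congr rfl (fun i hi => ?_)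
        rw [if_neg (Finset.ne_of_mem_erase hi), pow_one]
    have hfac1 : (∑ σ : Perm (Fin d), q ^ (d - ell σ) •
        MonoidAlgebra.of ℂ (Perm (Fin (d + 1))) (E d σ)) =
        A d (∑ π : Perm (Fin d), q ^ (d - ell π) • MonoidAlgebra.of ℂ (Perm (Fin d)) π) := by
      rw [map_sum]
      refine Finset.sum_congr rfl (fun σ _ => ?_)
      rw [map_smul, A_of]
    rw [hfac2, hfac1, IH, map_list_prod]
    rw [List.map_ofFn]
    have hcomp : ∀ j : Fin d, (A d) ((fun j : Fin d => 1 + q • JM d j) j) =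
        1 + q • JM (d + 1) j.castSucc := by
      intro j
      rw [map_add, map_one, map_smul, A_JM]
    rw [show (List.ofFn ((A d) ∘ fun j : Fin d => 1 + q • JM d j)) =
        List.ofFn (fun j : Fin d => 1 + q • JM (d + 1) j.castSucc) from
      congrArg List.ofFn (funext fun j => hcomp j)]
    rw [List.ofFn_succ' (fun j : Fin (d + 1) => 1 + q • JM (d + 1) j)]
    rw [List.concat_eq_append, List.prod_append, List.prod_cons, List.prod_nil, mul_one]

end JMaux

/-- For every scalar `q`, the exponential distance element
`∑_{π ∈ S_d} q^(d - ℓ(π)) π` of `ℂ[S_d]` factors as the product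
`(1 + qJ_1)(1 + qJ_2) ⋯ (1 + qJ_d)` over the Jucys–Murphy elements. -/
theorem omega_eq_prod_JM (d : ℕ) (hd : 1 ≤ d) (q : ℂ) :
    ∑ π : Equiv.Perm (Fin d),
        q ^ (d - ell π) • MonoidAlgebra.of ℂ (Equiv.Perm (Fin d)) π =
      (List.ofFn (fun j : Fin d => 1 + q • JM d j)).prod := by
  exact JMaux.main d q
end
end

section
/- Let d ≥ 1 and let f be a symmetric polynomial in d variables with complex coefficients. Then the element f(J_1, …, J_d) ∈ ℂ[S_d], obtained by evaluating f at the Jucys–Murphy elements, lies in the center of the group algebra ℂ[S_d]. -/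
noncomputable section

/-- Evaluation of a polynomial in `d` variables at the Jucys–Murphy elements `J_1, …, J_d`
(each monomial is evaluated as the ordered product `J_1^{m_1} ⋯ J_d^{m_d}`; since the
Jucys–Murphy elements commute, the order is immaterial). -/
def evalJM (d : ℕ) (f : MvPolynomial (Fin d) ℂ) : MonoidAlgebra ℂ (Equiv.Perm (Fin d)) :=
  ∑ m ∈ f.support, f.coeff m • (List.ofFn fun j : Fin d => JM d j ^ m j).prod

namespace JucysAux

open Finset Equiv MonoidAlgebra

/-! ### List-product extraction for pairwise commuting families -/

lemma ofFn_prod_extract {M : Type*} [Monoid M] : ∀ {d : ℕ} (g : Fin d → M),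
    (∀ i j, Commute (g i) (g j)) → ∀ (j : Fin d),
    (List.ofFn g).prod = g j * (List.ofFn (Function.update g j 1)).prod := by
  intro d
  induction d with
  | zero => exact fun g hg j => j.elim0
  | succ n ih =>
    intro g hg j
    rw [List.ofFn_succ, List.prod_cons]
    rcases eq_or_ne j 0 with rfl | hj
    · rw [List.ofFn_succ, List.prod_cons]
      have h0 : Function.update g 0 1 0 = 1 := Function.update_self _ _ _
      have htail : (fun i : Fin n => Function.update g 0 1 i.succ) = fun i => g i.succ := by
        funext i; exact Function.update_of_ne (Fin.succ_ne_zero i) _ _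
      rw [h0, htail, one_mul]
    · obtain ⟨i, rfl⟩ : ∃ i : Fin n, i.succ = j := ⟨j.pred hj, Fin.succ_pred j hj⟩
      have hgc : ∀ p q : Fin n, Commute (g p.succ) (g q.succ) :=
        fun p q => hg p.succ q.succ
      rw [ih (fun k => g k.succ) hgc i]
      rw [List.ofFn_succ, List.prod_cons]
      have h0 : Function.update g i.succ 1 0 = g 0 :=
        Function.update_of_ne (Fin.succ_ne_zero i).symm _ _
      have htail : (fun k : Fin n => Function.update g i.succ 1 k.succ)
          = Function.update (fun k : Fin n => g k.succ) i 1 := by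
        funext k
        rcases eq_or_ne k i with rfl | hk
        · rw [Function.update_self, Function.update_self]
        · rw [Function.update_of_ne (fun h => hk (Fin.succ_injective n h)) _ _,
            Function.update_of_ne hk]
      rw [h0, htail, ← mul_assoc, ← mul_assoc, (hg 0 i.succ).eq]

lemma commute_update_one {M : Type*} [Monoid M] {d : ℕ} {g : Fin d → M}
    (hg : ∀ i j, Commute (g i) (g j)) (a : Fin d) :
    ∀ i j, Commute (Function.update g a 1 i) (Function.update g a 1 j) := by
  intro i j
  have h : ∀ k, Function.update g a 1 k = 1 ∨ Function.update g a 1 k = g k := by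
    intro k
    rcases eq_or_ne k a with rfl | hk
    · exact Or.inl (Function.update_self _ _ _)
    · exact Or.inr (Function.update_of_ne hk _ _)
  rcases h i with hi | hi <;> rcases h j with hj | hj <;> rw [hi, hj] <;>
    first
      | exact Commute.one_left _
      | exact Commute.one_right _
      | exact hg i j

/-! ### Two-element power lemmas -/

lemma pow_add_pow_eq {R : Type*} [Ring R] {x y x' y' : R}
    (hxy : Commute x y) (hxy' : Commute x' y')
    (h1 : x + y = x' + y') (h2 : x * y = x' * y') :
    ∀ n : ℕ, x ^ n + y ^ n = x' ^ n + y' ^ n := by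
  have key : ∀ (x y : R), Commute x y → ∀ n : ℕ,
      x ^ (n + 2) + y ^ (n + 2)
        = (x + y) * (x ^ (n + 1) + y ^ (n + 1)) - x * y * (x ^ n + y ^ n) := by
    intro x y h n
    have e1 : y * x ^ (n + 1) = x * y * x ^ n := by
      rw [pow_succ', ← mul_assoc, ← h.eq]
    have e2 : x * y ^ (n + 1) = x * y * y ^ n := by
      rw [pow_succ', mul_assoc]
    rw [add_mul, mul_add, mul_add, e1, e2, mul_add, ← pow_succ', ← pow_succ']
    abel
  intro n
  induction n using Nat.strong_induction_on with
  | _ n ih =>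
    match n with
    | 0 => simp
    | 1 => simpa using h1
    | (n + 2) =>
      rw [key x y hxy n, key x' y' hxy' n, h1, h2, ih (n + 1) (by omega), ih n (by omega)]

lemma pow_mul_pow_add {R : Type*} [Ring R] {x y x' y' : R}
    (hxy : Commute x y) (hxy' : Commute x' y')
    (h1 : x + y = x' + y') (h2 : x * y = x' * y') (p q : ℕ) :
    x ^ p * y ^ q + x ^ q * y ^ p = x' ^ p * y' ^ q + x' ^ q * y' ^ p := by
  have key : ∀ p q : ℕ, q ≤ p →
      x ^ p * y ^ q + x ^ q * y ^ p = x' ^ p * y' ^ q + x' ^ q * y' ^ p := by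
    intro p q hqp
    have hps := pow_add_pow_eq hxy hxy' h1 h2 (p - q)
    have factor : ∀ (x y : R), Commute x y → ∀ p q : ℕ, q ≤ p →
        x ^ p * y ^ q + x ^ q * y ^ p = (x * y) ^ q * (x ^ (p - q) + y ^ (p - q)) := by
      intro x y h p q hqp
      rw [mul_add, h.mul_pow]
      congr 1
      · rw [mul_assoc, (h.symm.pow_pow q (p - q)).eq, ← mul_assoc, ← pow_add,
          Nat.add_sub_cancel' hqp]
      · rw [mul_assoc, ← pow_add, Nat.add_sub_cancel' hqp]
    rw [factor x y hxy p q hqp, factor x' y' hxy' p q hqp, h2, hps]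
  rcases le_total q p with h | h
  · exact key p q h
  · have := key q p h
    rw [add_comm, this, add_comm]

/-! ### Evaluation of polynomials at families and the key symmetry lemma -/

variable {d : ℕ} {S : Type*} [Ring S] [Algebra ℂ S]

def evalFam (u : Fin d → S) (f : MvPolynomial (Fin d) ℂ) : S :=
  ∑ m ∈ f.support, f.coeff m • (List.ofFn fun j : Fin d => u j ^ m j).prod

lemma evalFam_eq_of {a b : Fin d} (hab : a ≠ b) (u v : Fin d → S)
    (hu : ∀ i j, Commute (u i) (u j)) (hv : ∀ i j, Commute (v i) (v j))
    (hoff : ∀ j, j ≠ a → j ≠ b → u j = v j)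
    (h1 : u a + u b = v a + v b) (h2 : u a * u b = v a * v b)
    (f : MvPolynomial (Fin d) ℂ)
    (hf : MvPolynomial.rename (Equiv.swap a b) f = f) :
    evalFam u f = evalFam v f := by
  classical
  set σ := Equiv.swap a b with hσ
  set Φ : (Fin d →₀ ℕ) → (Fin d →₀ ℕ) := fun m => Finsupp.equivMapDomain σ m with hΦdef
  have hσσ : ∀ j, σ (σ j) = j := fun j => Equiv.swap_apply_self a b j
  have hΦapp : ∀ m j, Φ m j = m (σ j) := by
    intro m j
    show m (σ.symm j) = m (σ j)
    rw [Equiv.symm_swap]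
  have hΦΦ : ∀ m, Φ (Φ m) = m := by
    intro m; ext j; rw [hΦapp, hΦapp, hσσ]
  have hcoeff : ∀ m, f.coeff (Φ m) = f.coeff m := by
    intro m
    have h := MvPolynomial.coeff_rename_mapDomain (σ : Fin d → Fin d) σ.injective f m
    rw [hf] at h
    show MvPolynomial.coeff (Finsupp.equivMapDomain σ m) f = MvPolynomial.coeff m f
    rw [Finsupp.equivMapDomain_eq_mapDomain]
    exact h
  have hsupp : ∀ m ∈ f.support, Φ m ∈ f.support := by
    intro m hm
    rw [MvPolynomial.mem_support_iff] at hm ⊢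
    rw [hcoeff]; exact hm
  -- per-monomial core identity
  have ext2 : ∀ (w : Fin d → S), (∀ i j, Commute (w i) (w j)) → ∀ (e : Fin d → ℕ),
      (List.ofFn fun j => w j ^ e j).prod
        = w a ^ e a * (w b ^ e b *
            (List.ofFn (Function.update (Function.update (fun j => w j ^ e j) a 1) b 1)).prod) := by
    intro w hw e
    have hc : ∀ i j, Commute ((fun j => w j ^ e j) i) ((fun j => w j ^ e j) j) :=
      fun i j => (hw i j).pow_pow _ _
    rw [ofFn_prod_extract _ hc a]
    congr 1
    have hc2 := commute_update_one hc a
    rw [ofFn_prod_extract _ hc2 b]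
    congr 2
    exact Function.update_of_ne (Ne.symm hab) _ _
  have hR : ∀ (w w' : Fin d → S) (e e' : Fin d → ℕ),
      (∀ j, j ≠ a → j ≠ b → w j ^ e j = w' j ^ e' j) →
      Function.update (Function.update (fun j => w j ^ e j) a 1) b 1
        = Function.update (Function.update (fun j => w' j ^ e' j) a 1) b 1 := by
    intro w w' e e' h
    funext j
    rcases eq_or_ne j b with rfl | hb
    · rw [Function.update_self, Function.update_self]
    · rw [Function.update_of_ne hb, Function.update_of_ne hb]
      rcases eq_or_ne j a with rfl | ha
      · rw [Function.update_self, Function.update_self]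
      · rw [Function.update_of_ne ha, Function.update_of_ne ha]
        exact h j ha hb
  have core : ∀ m : Fin d →₀ ℕ,
      (List.ofFn fun j => u j ^ m j).prod + (List.ofFn fun j => u j ^ (Φ m) j).prod
        = (List.ofFn fun j => v j ^ m j).prod + (List.ofFn fun j => v j ^ (Φ m) j).prod := by
    intro m
    have hΦa : (Φ m) a = m b := by rw [hΦapp]; congr 1; exact Equiv.swap_apply_left a b
    have hΦb : (Φ m) b = m a := by rw [hΦapp]; congr 1; exact Equiv.swap_apply_right a b
    have hΦoff : ∀ j, j ≠ a → j ≠ b → (Φ m) j = m j := by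
      intro j hja hjb; rw [hΦapp]; congr 1
      exact Equiv.swap_apply_of_ne_of_ne hja hjb
    rw [ext2 u hu ⇑m, ext2 u hu ⇑(Φ m),
      ext2 v hv ⇑m, ext2 v hv ⇑(Φ m)]
    rw [hR u u ⇑(Φ m) ⇑m (fun j hja hjb => by rw [hΦoff j hja hjb]),
      hR v u ⇑m ⇑m (fun j hja hjb => by rw [hoff j hja hjb]),
      hR v u ⇑(Φ m) ⇑m
        (fun j hja hjb => by rw [hΦoff j hja hjb, hoff j hja hjb]),
      hΦa, hΦb]
    set R := (List.ofFn (Function.update (Function.update (fun j => u j ^ m j) a 1) b 1)).prod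
    simp only [← mul_assoc, ← add_mul]
    rw [pow_mul_pow_add (hu a b) (hv a b) h1 h2 (m a) (m b)]
  -- reindexing the support sum by Φ
  have reindex : ∀ (w : Fin d → S),
      (∑ m ∈ f.support, f.coeff m • (List.ofFn fun j => w j ^ m j).prod)
        = ∑ m ∈ f.support, f.coeff m • (List.ofFn fun j => w j ^ (Φ m) j).prod := by
    intro w
    refine Finset.sum_nbij' Φ Φ hsupp hsupp (fun m _ => hΦΦ m) (fun m _ => hΦΦ m) ?_
    intro m hm
    rw [hcoeff, hΦΦ]
  have key2 : ∀ (w : Fin d → S), evalFam w f + evalFam w f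
      = ∑ m ∈ f.support, f.coeff m •
          ((List.ofFn fun j => w j ^ m j).prod + (List.ofFn fun j => w j ^ (Φ m) j).prod) := by
    intro w
    rw [Finset.sum_congr rfl (fun m _ => smul_add (f.coeff m)
      ((List.ofFn fun j => w j ^ m j).prod) ((List.ofFn fun j => w j ^ (Φ m) j).prod)),
      Finset.sum_add_distrib]
    congr 1
    exact reindex w
  have hdouble : evalFam u f + evalFam u f = evalFam v f + evalFam v f := by
    rw [key2 u, key2 v]
    exact Finset.sum_congr rfl fun m _ => by rw [core m]
  have h2s : (2 : ℂ) • evalFam u f = (2 : ℂ) • evalFam v f := by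
    rw [two_smul, two_smul]; exact hdouble
  have := congrArg (fun z => (2 : ℂ)⁻¹ • z) h2s
  simpa [smul_smul, inv_mul_cancel₀ (two_ne_zero' ℂ)] using this

end JucysAux

open Finset Equiv MonoidAlgebra JucysAux

section JMFacts

variable {d : ℕ}

local notation "Of" => MonoidAlgebra.of ℂ (Equiv.Perm (Fin d))

lemma of_mul_JM_of_eq (σ : Equiv.Perm (Fin d)) (j : Fin d) (hj : σ j = j)
    (hlt : ∀ m : Fin d, m < j → σ m < j) :
    Of σ * JM d j = JM d j * Of σ := by
  unfold JM
  rw [Finset.mul_sum, Finset.sum_mul]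
  have himg : (Finset.univ.filter (fun i => i < j)).image σ
      = Finset.univ.filter (fun i => i < j) := by
    apply Finset.eq_of_subset_of_card_le
    · intro x hx
      simp only [Finset.mem_image, Finset.mem_filter, Finset.mem_univ, true_and] at hx ⊢
      obtain ⟨y, hy, rfl⟩ := hx
      exact hlt y hy
    · rw [Finset.card_image_of_injective _ σ.injective]
  calc ∑ i ∈ Finset.univ.filter (fun i => i < j), Of σ * Of (Equiv.swap i j)
      = ∑ i ∈ Finset.univ.filter (fun i => i < j), Of (Equiv.swap (σ i) j) * Of σ := by
        refine Finset.sum_congr rfl fun i hi => ?_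
        rw [← map_mul, ← map_mul]
        congr 1
        have h := Equiv.swap_apply_apply σ i j
        have : Equiv.swap (σ i) (σ j) * σ = σ * Equiv.swap i j := by
          rw [h, mul_assoc, inv_mul_cancel, mul_one]
        rw [← this, hj]
    _ = ∑ i ∈ Finset.univ.filter (fun i => i < j), Of (Equiv.swap i j) * Of σ := by
        rw [← Finset.sum_image (g := ⇑σ) (f := fun i => Of (Equiv.swap i j) * Of σ)
          (fun x _ y _ h => σ.injective h), himg]

lemma JM_commute (i j : Fin d) : Commute (JM d i) (JM d j) := by
  have key : ∀ p q : Fin d, p < q → Commute (JM d p) (JM d q) := by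
    intro p q hpq
    show JM d p * JM d q = JM d q * JM d p
    have : JM d p = ∑ k ∈ Finset.univ.filter (fun k => k < p), Of (Equiv.swap k p) := rfl
    rw [this, Finset.sum_mul, Finset.mul_sum]
    refine Finset.sum_congr rfl fun k hk => ?_
    simp only [Finset.mem_filter, Finset.mem_univ, true_and] at hk
    have hkq : k < q := lt_trans hk hpq
    exact (of_mul_JM_of_eq (Equiv.swap k p) q
      (Equiv.swap_apply_of_ne_of_ne (ne_of_gt hkq) (ne_of_gt hpq))
      (fun m hm => by
        rcases eq_or_ne m k with rfl | h1
        · rw [Equiv.swap_apply_left]; exact hpq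
        · rcases eq_or_ne m p with rfl | h2
          · rw [Equiv.swap_apply_right]; exact hkq
          · rw [Equiv.swap_apply_of_ne_of_ne h1 h2]; exact hm))
  rcases lt_trichotomy i j with h | rfl | h
  · exact key i j h
  · exact Commute.refl _
  · exact (key j i h).symm

end JMFacts

/-- Jucys. Every symmetric polynomial function of the Jucys–Murphy elements
lies in the center of the group algebra `ℂ[S_d]`. -/
theorem evalJM_symmetric_central (d : ℕ) (hd : 1 ≤ d)
    (f : MvPolynomial (Fin d) ℂ) (hf : f.IsSymmetric) :
    ∀ x : MonoidAlgebra ℂ (Equiv.Perm (Fin d)), evalJM d f * x = x * evalJM d f := by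
  classical
  set Of : Equiv.Perm (Fin d) →* MonoidAlgebra ℂ (Equiv.Perm (Fin d)) :=
    MonoidAlgebra.of ℂ (Equiv.Perm (Fin d)) with hOf
  set z := evalJM d f with hz
  -- Step 1: z commutes with every adjacent transposition
  have hgen : ∀ a b : Fin d, (b : ℕ) = (a : ℕ) + 1 →
      Of (Equiv.swap a b) * z = z * Of (Equiv.swap a b) := by
    intro a b hba
    have hab : a ≠ b := fun h => by rw [h] at hba; omega
    set s : Equiv.Perm (Fin d) := Equiv.swap a b with hs
    have hss' : s * s = 1 := by rw [hs]; exact Equiv.swap_mul_self a b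
    have hinv : s⁻¹ = s := by rw [hs]; exact Equiv.swap_inv a b
    have hss : Of s * Of s = 1 := by rw [← map_mul, hss', map_one]
    have conj_mul : ∀ x y : MonoidAlgebra ℂ (Equiv.Perm (Fin d)),
        (Of s * x * Of s) * (Of s * y * Of s) = Of s * (x * y) * Of s := by
      intro x y
      have h : Of s * (Of s * (y * Of s)) = y * Of s := by
        rw [← mul_assoc, hss, one_mul]
      simp only [mul_assoc, h]
    have conj_pow : ∀ (x : MonoidAlgebra ℂ (Equiv.Perm (Fin d))) (k : ℕ),
        Of s * x ^ k * Of s = (Of s * x * Of s) ^ k := by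
      intro x k
      induction k with
      | zero => simp [hss]
      | succ k ih => rw [pow_succ, pow_succ, ← ih, conj_mul]
    have conj_list : ∀ L : List (MonoidAlgebra ℂ (Equiv.Perm (Fin d))),
        Of s * L.prod * Of s = (L.map fun x => Of s * x * Of s).prod := by
      intro L
      induction L with
      | nil => simpa using hss
      | cons h t ih => rw [List.map_cons, List.prod_cons, List.prod_cons, ← ih, conj_mul]
    -- conjugates of the JM elements
    set K : Fin d → MonoidAlgebra ℂ (Equiv.Perm (Fin d)) :=
      fun j => Of s * JM d j * Of s with hK
    have hsa : s a = b := Equiv.swap_apply_left a b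
    have hsb : s b = a := Equiv.swap_apply_right a b
    have hsother : ∀ j : Fin d, j ≠ a → j ≠ b → s j = j :=
      fun j hja hjb => Equiv.swap_apply_of_ne_of_ne hja hjb
    have hKoff : ∀ j, j ≠ a → j ≠ b → K j = JM d j := by
      intro j hja hjb
      have hja' : (j : ℕ) ≠ (a : ℕ) := fun h => hja (Fin.ext h)
      have hjb' : (j : ℕ) ≠ (b : ℕ) := fun h => hjb (Fin.ext h)
      have hlt : ∀ m : Fin d, m < j → s m < j := by
        intro m hm
        have hcases : ((s m : Fin d) : ℕ) = (m : ℕ) ∨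
            (((s m : Fin d) : ℕ) = (a : ℕ) ∧ (m : ℕ) = (b : ℕ)) ∨
            (((s m : Fin d) : ℕ) = (b : ℕ) ∧ (m : ℕ) = (a : ℕ)) := by
          rcases eq_or_ne m a with rfl | h1
          · right; right; rw [hsa]; exact ⟨rfl, rfl⟩
          · rcases eq_or_ne m b with rfl | h2
            · right; left; rw [hsb]; exact ⟨rfl, rfl⟩
            · left; rw [hsother m h1 h2]
        rw [Fin.lt_def] at hm ⊢
        omega
      have hcomm := of_mul_JM_of_eq s j (hsother j hja hjb) hlt
      show Of s * JM d j * Of s = JM d j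
      rw [hcomm, mul_assoc, hss, mul_one]
    -- the filter splitting
    have hsplit : Finset.univ.filter (fun x : Fin d => x < b)
        = insert a (Finset.univ.filter fun x : Fin d => x < a) := by
      ext x
      simp only [Finset.mem_filter, Finset.mem_univ, true_and, Finset.mem_insert,
        Fin.lt_def, Fin.ext_iff]
      omega
    have hanotin : a ∉ Finset.univ.filter (fun x : Fin d => x < a) :=
      fun h => absurd (Finset.mem_filter.mp h).2 (lt_irrefl a)
    have hxlt : ∀ x : Fin d, x < a → x ≠ a ∧ x ≠ b := by
      intro x hx
      rw [Fin.lt_def] at hx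
      exact ⟨fun h => by rw [Fin.ext_iff] at h; omega,
        fun h => by rw [Fin.ext_iff] at h; omega⟩
    have conjA : Of s * JM d a * Of s = JM d b - Of s := by
      have hJa : JM d a = ∑ x ∈ Finset.univ.filter (fun x : Fin d => x < a),
          Of (Equiv.swap x a) := rfl
      have hJb : JM d b = ∑ x ∈ Finset.univ.filter (fun x : Fin d => x < b),
          Of (Equiv.swap x b) := rfl
      rw [hJa, hJb, hsplit, Finset.sum_insert hanotin, Finset.mul_sum, Finset.sum_mul]
      have hc : ∀ x ∈ Finset.univ.filter (fun x : Fin d => x < a),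
          Of s * Of (Equiv.swap x a) * Of s = Of (Equiv.swap x b) := by
        intro x hx
        simp only [Finset.mem_filter, Finset.mem_univ, true_and] at hx
        obtain ⟨hxa, hxb⟩ := hxlt x hx
        rw [← map_mul, ← map_mul]
        congr 1
        calc s * Equiv.swap x a * s = s * Equiv.swap x a * s⁻¹ := by rw [hinv]
          _ = Equiv.swap (s x) (s a) := (Equiv.swap_apply_apply s x a).symm
          _ = Equiv.swap x b := by rw [hsother x hxa hxb, hsa]
      rw [Finset.sum_congr rfl hc, show Equiv.swap a b = s from rfl]
      abel
    have conjB : Of s * JM d b * Of s = JM d a + Of s := by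
      have hJa : JM d a = ∑ x ∈ Finset.univ.filter (fun x : Fin d => x < a),
          Of (Equiv.swap x a) := rfl
      have hJb : JM d b = ∑ x ∈ Finset.univ.filter (fun x : Fin d => x < b),
          Of (Equiv.swap x b) := rfl
      rw [hJa, hJb, hsplit, Finset.sum_insert hanotin, mul_add, add_mul, Finset.mul_sum,
        Finset.sum_mul]
      have hterm : Of s * Of (Equiv.swap a b) * Of s = Of s := by
        rw [show Equiv.swap a b = s from rfl, ← map_mul, ← map_mul]
        congr 1
        rw [mul_assoc, hss', mul_one]
      have hrest : ∀ x ∈ Finset.univ.filter (fun x : Fin d => x < a),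
          Of s * Of (Equiv.swap x b) * Of s = Of (Equiv.swap x a) := by
        intro x hx
        simp only [Finset.mem_filter, Finset.mem_univ, true_and] at hx
        obtain ⟨hxa, hxb⟩ := hxlt x hx
        rw [← map_mul, ← map_mul]
        congr 1
        calc s * Equiv.swap x b * s = s * Equiv.swap x b * s⁻¹ := by rw [hinv]
          _ = Equiv.swap (s x) (s b) := (Equiv.swap_apply_apply s x b).symm
          _ = Equiv.swap x a := by rw [hsother x hxa hxb, hsb]
      rw [hterm, Finset.sum_congr rfl hrest]
      abel
    -- derived identities
    have hMulsa : Of s * JM d a = JM d b * Of s - 1 := by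
      have h := congrArg (fun x => x * Of s) conjA
      simp only [sub_mul, mul_assoc, hss, mul_one] at h
      exact h
    have hKcomm : ∀ p q, Commute (K p) (K q) := by
      intro p q
      show (Of s * JM d p * Of s) * (Of s * JM d q * Of s)
        = (Of s * JM d q * Of s) * (Of s * JM d p * Of s)
      rw [conj_mul, conj_mul, (JM_commute p q).eq]
    have h1 : K a + K b = JM d a + JM d b := by
      show (Of s * JM d a * Of s) + (Of s * JM d b * Of s) = _
      rw [conjA, conjB]
      abel
    have h2 : K a * K b = JM d a * JM d b := by
      show (Of s * JM d a * Of s) * (Of s * JM d b * Of s) = _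
      rw [conjA, conjB, sub_mul, mul_add, mul_add, hMulsa, hss, (JM_commute a b).eq]
      abel
    -- conjugation of the evaluation
    have hconj : Of s * z * Of s = evalFam K f := by
      rw [hz]
      show Of s * (∑ m ∈ f.support, f.coeff m •
        (List.ofFn fun j : Fin d => JM d j ^ m j).prod) * Of s = _
      rw [Finset.mul_sum, Finset.sum_mul]
      unfold evalFam
      refine Finset.sum_congr rfl fun m hm => ?_
      rw [mul_smul_comm, smul_mul_assoc]
      congr 1
      have hfun : ((fun x => Of s * x * Of s) ∘ fun j : Fin d => JM d j ^ m j)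
          = fun j : Fin d => K j ^ m j := by
        funext j
        show Of s * JM d j ^ m j * Of s = K j ^ m j
        rw [conj_pow]
      rw [conj_list, List.map_ofFn, hfun]
    have hKJ : evalFam K f = evalFam (JM d) f :=
      evalFam_eq_of hab K (JM d) hKcomm JM_commute hKoff h1 h2 f (hf (Equiv.swap a b))
    have hfix : Of s * z * Of s = z := by
      rw [hconj, hKJ]; rfl
    calc Of s * z = Of s * z * (Of s * Of s) := by rw [hss, mul_one]
      _ = (Of s * z * Of s) * Of s := by simp only [mul_assoc]
      _ = z * Of s := by rw [hfix]
  -- Step 2: z commutes with every group element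
  have hofg : ∀ g : Equiv.Perm (Fin d), Of g * z = z * Of g := by
    obtain ⟨n, rfl⟩ : ∃ n, d = n + 1 := ⟨d - 1, by omega⟩
    intro g
    have hg : g ∈ Submonoid.closure
        (Set.range fun i : Fin n => Equiv.swap i.castSucc i.succ) := by
      rw [Equiv.Perm.mclosure_swap_castSucc_succ]
      trivial
    induction hg using Submonoid.closure_induction with
    | mem x hx =>
      obtain ⟨i, rfl⟩ := hx
      exact hgen i.castSucc i.succ (by simp)
    | one => rw [map_one, one_mul, mul_one]
    | mul x y hx hy ihx ihy =>
      rw [map_mul, mul_assoc, ihy, ← mul_assoc, ihx, mul_assoc]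
  -- Step 3: conclude for all x
  intro x
  induction x using MonoidAlgebra.induction_on with
  | of g => exact (hofg g).symm
  | add p q hp hq => rw [mul_add, add_mul, hp, hq]
  | smul r p hp => rw [mul_smul_comm, smul_mul_assoc, hp]
end
end

section
/- Let d ≥ 1 and r ≥ 0, and for ρ, σ ∈ S_d let W^r_≤(ρ,σ) denote the number of weakly monotone r-step walks from ρ to σ in the Hurwitz–Cayley graph. Then W^r_≤(ι,π) depends only on the cycle type of π: if π and π′ are conjugate in S_d, then W^r_≤(ι,π) = W^r_≤(ι,π′). Consequently W^r_≤(ρ,σ) depends only on the cycle type of ρ⁻¹σ. -/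
noncomputable section

/-- `Wle d r ρ σ` is the number of weakly monotone (weakly increasing) `r`-step walks `ρ → σ` in
the Hurwitz–Cayley graph: sequences of transpositions `((i_1 j_1), …, (i_r j_r))` with `i_k < j_k`,
`j_1 ≤ j_2 ≤ ⋯ ≤ j_r` and `ρ·(i_1 j_1)⋯(i_r j_r) = σ`. -/
def Wle (d r : ℕ) (ρ σ : Equiv.Perm (Fin d)) : ℕ :=
  Nat.card {l : List (Fin d × Fin d) //
    l.length = r ∧ (∀ p ∈ l, p.1 < p.2) ∧ (l.map Prod.snd).Pairwise (· ≤ ·) ∧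
      ρ * (l.map toSwap).prod = σ}

open Finset Equiv MonoidAlgebra

section RingLemmas

variable {R : Type*} [Ring R]

def h2 (x y : R) (M : ℕ) : R := ∑ a ∈ Finset.range (M+1), x^a * y^(M-a)

lemma h2_zero (x y : R) : h2 x y 0 = 1 := by simp [h2]

lemma h2_one (x y : R) : h2 x y 1 = y + x := by
  simp [h2, Finset.sum_range_succ]

lemma x_mul_h2 (x y : R) (M : ℕ) : x * h2 x y M = h2 x y (M+1) - y^(M+1) := by
  rw [h2, h2, Finset.mul_sum, Finset.sum_range_succ' (fun a => x^a * y^(M+1-a))]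
  simp only [pow_zero, one_mul, Nat.succ_sub_succ, Nat.sub_zero]
  rw [add_sub_cancel_right]
  exact Finset.sum_congr rfl fun a _ => by rw [← mul_assoc, ← pow_succ']

lemma y_mul_h2 {x y : R} (hxy : Commute x y) (M : ℕ) :
    y * h2 x y M = h2 x y (M+1) - x^(M+1) := by
  rw [h2, h2, Finset.mul_sum, Finset.sum_range_succ (fun a => x^a * y^(M+1-a))]
  simp only [Nat.sub_self, pow_zero, mul_one]
  rw [add_sub_cancel_right]
  refine Finset.sum_congr rfl fun a ha => ?_
  rw [Finset.mem_range] at ha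
  rw [show M+1-a = (M-a)+1 from by omega, ← mul_assoc, (hxy.symm.pow_right a).eq,
    mul_assoc, ← pow_succ']

lemma h2_rec {x y : R} (hxy : Commute x y) (M : ℕ) :
    h2 x y (M+2) = (x + y) * h2 x y (M+1) - x * y * h2 x y M := by
  show h2 x y (M+1+1) = _
  rw [add_mul, mul_assoc, y_mul_h2 hxy M, mul_sub, x_mul_h2 x y (M+1), y_mul_h2 hxy (M+1),
    ← pow_succ']
  abel

lemma comm_h2 {s x y : R} (h1 : Commute s (x+y)) (h2' : Commute s (x*y))
    (hxy : Commute x y) : ∀ M, Commute s (h2 x y M)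
  | 0 => by rw [h2_zero]; exact Commute.one_right s
  | 1 => by rw [h2_one]; rwa [add_comm] at h1
  | (M+2) => by
    rw [h2_rec hxy]
    exact (h1.mul_right (comm_h2 h1 h2' hxy (M+1))).sub_right
      (h2'.mul_right (comm_h2 h1 h2' hxy M))

def Pform : List R → ℕ → R
  | [], 0 => 1
  | [], _+1 => 0
  | x :: xs, r => ∑ m ∈ Finset.range (r+1), x^m * Pform xs (r-m)

lemma Pform_nil_zero : Pform ([] : List R) 0 = 1 := rfl
lemma Pform_nil_succ (n : ℕ) : Pform ([] : List R) (n+1) = 0 := rfl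
lemma Pform_cons (x : R) (xs : List R) (r : ℕ) :
    Pform (x :: xs) r = ∑ m ∈ Finset.range (r+1), x^m * Pform xs (r-m) := rfl

lemma comm_Pform {s : R} {L : List R} (h : ∀ z ∈ L, Commute s z) :
    ∀ r, Commute s (Pform L r) := by
  induction L with
  | nil =>
    intro r
    cases r with
    | zero => rw [Pform_nil_zero]; exact Commute.one_right s
    | succ n => rw [Pform_nil_succ]; exact Commute.zero_right s
  | cons x xs ih =>
    intro r
    rw [Pform_cons]
    refine Commute.sum_right _ _ _ fun m _ => ?_
    exact ((h x (by simp)).pow_right m).mul_right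
      ((ih (fun z hz => h z (by simp [hz]))) (r-m))

lemma triangle {M : Type*} [AddCommMonoid M] (F : ℕ → ℕ → M) (r : ℕ) :
    ∑ a ∈ range (r+1), ∑ b ∈ range (r-a+1), F a b
      = ∑ n ∈ range (r+1), ∑ a ∈ range (n+1), F a (n-a) := by
  rw [Finset.sum_sigma', Finset.sum_sigma']
  refine Finset.sum_nbij' (fun p => ⟨p.1 + p.2, p.1⟩) (fun p => ⟨p.2, p.1 - p.2⟩)
    ?_ ?_ ?_ ?_ ?_
  · rintro ⟨a, b⟩ h
    simp only [Finset.mem_sigma, Finset.mem_range] at h ⊢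
    omega
  · rintro ⟨n, a⟩ h
    simp only [Finset.mem_sigma, Finset.mem_range] at h ⊢
    omega
  · rintro ⟨a, b⟩ h
    simp only [Finset.mem_sigma, Finset.mem_range] at h
    have : a + b - a = b := by omega
    simp only [this]
  · rintro ⟨n, a⟩ h
    simp only [Finset.mem_sigma, Finset.mem_range] at h
    have : a + (n - a) = n := by omega
    simp only [this]
  · rintro ⟨a, b⟩ h
    simp only [Finset.mem_sigma, Finset.mem_range] at h
    have : a + b - a = b := by omega
    simp only [this]

lemma Pform_cons_cons (x y : R) (L : List R) (r : ℕ) :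
    Pform (x :: y :: L) r = ∑ M ∈ range (r+1), h2 x y M * Pform L (r-M) := by
  rw [Pform_cons]
  calc (∑ a ∈ Finset.range (r+1), x^a * Pform (y :: L) (r-a))
      = ∑ a ∈ range (r+1), ∑ b ∈ range (r-a+1), x^a * y^b * Pform L (r-a-b) := by
        refine Finset.sum_congr rfl fun a _ => ?_
        rw [Pform_cons, Finset.mul_sum]
        exact Finset.sum_congr rfl fun b _ => by rw [mul_assoc]
    _ = ∑ M ∈ range (r+1), ∑ a ∈ range (M+1), x^a * y^(M-a) * Pform L (r-a-(M-a)) :=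
        triangle (fun a b => x^a * y^b * Pform L (r-a-b)) r
    _ = ∑ M ∈ range (r+1), h2 x y M * Pform L (r-M) := by
        refine Finset.sum_congr rfl fun M hM => ?_
        rw [h2, Finset.sum_mul]
        refine Finset.sum_congr rfl fun a ha => ?_
        rw [Finset.mem_range] at ha
        rw [show r - a - (M-a) = r - M from by omega]

lemma comm_Pform_splice {s x y : R} (hs1 : Commute s (x+y)) (hs2 : Commute s (x*y))
    (hxy : Commute x y) :
    ∀ (L1 : List R), (∀ z ∈ L1, Commute s z) → ∀ {L2 : List R}, (∀ z ∈ L2, Commute s z) →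
    ∀ r, Commute s (Pform (L1 ++ x :: y :: L2) r) := by
  intro L1
  induction L1 with
  | nil =>
    intro _ L2 h2c r
    rw [List.nil_append, Pform_cons_cons]
    exact Commute.sum_right _ _ _ fun M _ =>
      (comm_h2 hs1 hs2 hxy M).mul_right (comm_Pform h2c (r-M))
  | cons z L1' ih =>
    intro h1 L2 h2c r
    rw [List.cons_append, Pform_cons]
    refine Commute.sum_right _ _ _ fun m _ => ?_
    exact ((h1 z (by simp)).pow_right m).mul_right
      (ih (fun w hw => h1 w (by simp [hw])) h2c (r-m))

end RingLemmas

section PermAlg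

abbrev PA (d : ℕ) := MonoidAlgebra ℤ (Equiv.Perm (Fin d))

variable {d : ℕ}

def og (g : Equiv.Perm (Fin d)) : PA d := MonoidAlgebra.single g 1
lemma og_mul (g h : Equiv.Perm (Fin d)) : og (g*h) = og g * og h := by
  simp [og, MonoidAlgebra.single_mul_single]
lemma og_one : og (1 : Equiv.Perm (Fin d)) = 1 := rfl
def Jm (j : Fin d) : PA d := ∑ i ∈ Finset.Iio j, og (Equiv.swap i j)

variable {a b : Fin d}

lemma hab_lt (hab : (a:ℕ) + 1 = (b:ℕ)) : a < b := by rw [Fin.lt_def]; omega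

lemma Iio_b (hab : (a:ℕ) + 1 = (b:ℕ)) : Finset.Iio b = insert a (Finset.Iio a) := by
  ext i
  simp only [mem_Iio, mem_insert, Fin.lt_def, ← hab]
  constructor
  · intro h
    rcases Nat.lt_succ_iff_lt_or_eq.mp h with h | h
    · exact Or.inr h
    · exact Or.inl (Fin.ext h)
  · rintro (rfl | h) <;> omega

-- conjugation identity: s * swap i j = swap (s i) (s j) * s
lemma conj_swap (s : Equiv.Perm (Fin d)) (hs : s⁻¹ = s) (i j : Fin d) :
    s * Equiv.swap i j = Equiv.swap (s i) (s j) * s := by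
  have := Equiv.swap_apply_apply s i j
  rw [hs] at this
  have h2 : s * s = 1 := by nth_rewrite 2 [← hs]; simp
  rw [this, mul_assoc, mul_assoc, h2, mul_one]

lemma R2 (hab : (a:ℕ) + 1 = (b:ℕ)) :
    og (Equiv.swap a b) * Jm a = Jm b * og (Equiv.swap a b) - 1 := by
  have hne : a ≠ b := Fin.ne_of_lt (hab_lt hab)
  have hstep : ∀ i ∈ Finset.Iio a, og (Equiv.swap a b) * og (Equiv.swap i a)
      = og (Equiv.swap i b) * og (Equiv.swap a b) := by
    intro i hi
    rw [mem_Iio] at hi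
    have hia : i ≠ a := Fin.ne_of_lt hi
    have hib : i ≠ b := Fin.ne_of_lt (hi.trans (hab_lt hab))
    rw [← og_mul, ← og_mul, conj_swap _ (Equiv.swap_inv a b) i a,
      Equiv.swap_apply_of_ne_of_ne hia hib, Equiv.swap_apply_left]
  rw [Jm, Jm, Finset.mul_sum, Iio_b hab, Finset.sum_insert (by simp), add_mul,
    Finset.sum_mul, Finset.sum_congr rfl hstep, ← og_mul, Equiv.swap_mul_self, og_one]
  abel

lemma R3 (hab : (a:ℕ) + 1 = (b:ℕ)) :
    og (Equiv.swap a b) * Jm b = Jm a * og (Equiv.swap a b) + 1 := by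
  have hstep : ∀ i ∈ Finset.Iio a, og (Equiv.swap a b) * og (Equiv.swap i b)
      = og (Equiv.swap i a) * og (Equiv.swap a b) := by
    intro i hi
    rw [mem_Iio] at hi
    have hia : i ≠ a := Fin.ne_of_lt hi
    have hib : i ≠ b := Fin.ne_of_lt (hi.trans (hab_lt hab))
    rw [← og_mul, ← og_mul, conj_swap _ (Equiv.swap_inv a b) i b,
      Equiv.swap_apply_of_ne_of_ne hia hib, Equiv.swap_apply_right]
  rw [Jm, Jm, Finset.mul_sum, Iio_b hab, Finset.sum_insert (by simp),
    Finset.sum_mul, Finset.sum_congr rfl hstep, ← og_mul, Equiv.swap_mul_self, og_one]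
  abel

lemma swap_lt_iff (hab : (a:ℕ) + 1 = (b:ℕ)) {j : Fin d} (hja : j ≠ a) (hjb : j ≠ b)
    (i : Fin d) : Equiv.swap a b i < j ↔ i < j := by
  have hja' : (j:ℕ) ≠ a := fun h => hja (Fin.ext h)
  have hjb' : (j:ℕ) ≠ b := fun h => hjb (Fin.ext h)
  by_cases hia : i = a
  · subst hia; rw [Equiv.swap_apply_left]
    simp only [Fin.lt_def]; omega
  by_cases hib : i = b
  · subst hib; rw [Equiv.swap_apply_right]
    simp only [Fin.lt_def]; omega
  · rw [Equiv.swap_apply_of_ne_of_ne hia hib]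

lemma R1 (hab : (a:ℕ) + 1 = (b:ℕ)) {j : Fin d} (hja : j ≠ a) (hjb : j ≠ b) :
    og (Equiv.swap a b) * Jm j = Jm j * og (Equiv.swap a b) := by
  have hsj : Equiv.swap a b j = j := Equiv.swap_apply_of_ne_of_ne hja hjb
  have key : ∀ i : Fin d, Equiv.swap a b * Equiv.swap i j
      = Equiv.swap (Equiv.swap a b i) j * Equiv.swap a b := by
    intro i
    have := Equiv.swap_apply_apply (Equiv.swap a b) i j
    rw [hsj] at this
    rw [this, Equiv.swap_inv, mul_assoc, Equiv.swap_mul_self, mul_one]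
  rw [Jm, Finset.mul_sum, Finset.sum_mul]
  rw [show ∀ (f : Fin d → PA d), (∑ i ∈ Iio j, f i) = (∑ i ∈ Iio j, f i) from fun _ => rfl]
  calc ∑ i ∈ Iio j, og (Equiv.swap a b) * og (Equiv.swap i j)
      = ∑ i ∈ Iio j, og (Equiv.swap (Equiv.swap a b i) j) * og (Equiv.swap a b) := by
        refine Finset.sum_congr rfl fun i _ => ?_
        rw [← og_mul, ← og_mul, key]
    _ = ∑ i ∈ Iio j, og (Equiv.swap i j) * og (Equiv.swap a b) := by
        refine Finset.sum_equiv (Equiv.swap a b) (fun i => ?_) (fun i _ => rfl)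
        simp only [mem_Iio]
        exact (swap_lt_iff hab hja hjb i).symm

lemma swap_disjoint_commute {i a i' b : Fin d} (h1 : i ≠ i') (h2 : i ≠ b) (h3 : a ≠ i')
    (h4 : a ≠ b) : Commute (Equiv.swap i a) (Equiv.swap i' b) := by
  apply Equiv.Perm.Disjoint.commute
  intro x
  by_cases hx : x = i ∨ x = a
  · right
    rcases hx with rfl | rfl
    · exact Equiv.swap_apply_of_ne_of_ne h1 h2
    · exact Equiv.swap_apply_of_ne_of_ne h3 h4
  · left
    push_neg at hx
    exact Equiv.swap_apply_of_ne_of_ne hx.1 hx.2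

-- f = swap i a conjugation identities
lemma id2 {i a b : Fin d} (hia : i ≠ a) (hib : i ≠ b) (hba : a ≠ b) :
    Equiv.swap i b * Equiv.swap i a = Equiv.swap i a * Equiv.swap a b := by
  have h := Equiv.swap_apply_apply (Equiv.swap i a) a b
  rw [Equiv.swap_apply_right, Equiv.swap_apply_of_ne_of_ne (Ne.symm hib) (Ne.symm hba),
    Equiv.swap_inv] at h
  rw [h, mul_assoc, mul_assoc, Equiv.swap_mul_self, mul_one]

lemma id1 {i a b : Fin d} (hia : i ≠ a) (hib : i ≠ b) (hba : a ≠ b) :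
    Equiv.swap a b * Equiv.swap i a = Equiv.swap i a * Equiv.swap i b := by
  have h := Equiv.swap_apply_apply (Equiv.swap i a) i b
  rw [Equiv.swap_apply_left, Equiv.swap_apply_of_ne_of_ne (Ne.symm hib) (Ne.symm hba),
    Equiv.swap_inv] at h
  rw [h, mul_assoc, mul_assoc, Equiv.swap_mul_self, mul_one]

lemma commute_swap_Jm {i a b : Fin d} (hia : i < a) (hab : a < b) :
    Commute (og (Equiv.swap i a)) (Jm b) := by
  have hia' : i ≠ a := Fin.ne_of_lt hia
  have hib : i ≠ b := Fin.ne_of_lt (hia.trans hab)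
  have hab' : a ≠ b := Fin.ne_of_lt hab
  have hmem_a : a ∈ Finset.Iio b := by simpa using hab
  have hmem_i : i ∈ (Finset.Iio b).erase a := by
    simp [Finset.mem_erase, hia', hia.trans hab]
  have hset : Finset.Iio b = insert a (insert i (((Finset.Iio b).erase a).erase i)) := by
    rw [Finset.insert_erase hmem_i, Finset.insert_erase hmem_a]
  have hna : a ∉ insert i (((Finset.Iio b).erase a).erase i) := by
    simp [Finset.mem_insert, Finset.mem_erase, Ne.symm hia']
  have hni : i ∉ ((Finset.Iio b).erase a).erase i := Finset.notMem_erase _ _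
  unfold Commute SemiconjBy
  rw [Jm, Finset.mul_sum, Finset.sum_mul, hset, Finset.sum_insert hna, Finset.sum_insert hni,
    Finset.sum_insert hna, Finset.sum_insert hni]
  have e1 : og (Equiv.swap i a) * og (Equiv.swap a b) = og (Equiv.swap i b) * og (Equiv.swap i a) := by
    rw [← og_mul, ← og_mul, id2 hia' hib hab']
  have e2 : og (Equiv.swap i a) * og (Equiv.swap i b) = og (Equiv.swap a b) * og (Equiv.swap i a) := by
    rw [← og_mul, ← og_mul, id1 hia' hib hab']
  have e3 : ∀ i' ∈ ((Finset.Iio b).erase a).erase i,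
      og (Equiv.swap i a) * og (Equiv.swap i' b) = og (Equiv.swap i' b) * og (Equiv.swap i a) := by
    intro i' hi'
    simp only [Finset.mem_erase, Finset.mem_Iio] at hi'
    obtain ⟨hi'1, hi'2, hi'3⟩ := hi'
    rw [← og_mul, ← og_mul,
      (swap_disjoint_commute (Ne.symm hi'1) hib (Ne.symm hi'2) hab').eq]
  rw [e1, e2, Finset.sum_congr rfl e3]
  abel

lemma R4 {a b : Fin d} (hab : a < b) : Commute (Jm a) (Jm b) := by
  rw [Jm]
  exact Commute.sum_left _ _ _ fun i hi =>
    commute_swap_Jm (Finset.mem_Iio.mp hi) hab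

def Blocks (v : Fin d) : ℕ → Finset (List (Fin d × Fin d))
  | 0 => {[]}
  | m+1 => (Finset.Iio v).biUnion fun i => (Blocks v m).image (List.cons (i, v))

lemma mem_Blocks' {v : Fin d} : ∀ (m : ℕ) (l : List (Fin d × Fin d)),
    l ∈ Blocks v m ↔ l.length = m ∧ ∀ p ∈ l, p.2 = v ∧ p.1 < v := by
  intro m
  induction m with
  | zero =>
    intro l
    simp [Blocks, List.length_eq_zero_iff]
    rintro rfl; simp
  | succ m ih =>
    intro l
    simp only [Blocks, Finset.mem_biUnion, Finset.mem_image, Finset.mem_Iio]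
    constructor
    · rintro ⟨i, hi, t, ht, rfl⟩
      obtain ⟨hlen, hprop⟩ := (ih t).mp ht
      refine ⟨by simp [hlen], ?_⟩
      intro p hp
      rcases List.mem_cons.mp hp with rfl | hp'
      · exact ⟨rfl, hi⟩
      · exact hprop p hp' 
    · rintro ⟨hlen, hprop⟩
      cases l with
      | nil => simp at hlen
      | cons p t =>
        obtain ⟨hp2, hp1⟩ := hprop p (by simp)
        refine ⟨p.1, hp1, t,
          (ih t).mpr ⟨by simpa using hlen, fun q hq => hprop q (by simp [hq])⟩, ?_⟩
        rw [← hp2]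

lemma mem_Blocks {v : Fin d} {m : ℕ} {l : List (Fin d × Fin d)} :
    l ∈ Blocks v m ↔ l.length = m ∧ ∀ p ∈ l, p.2 = v ∧ p.1 < v := mem_Blocks' m l

lemma sum_Blocks {v : Fin d} : ∀ (m : ℕ),
    (∑ l ∈ Blocks v m, og ((l.map toSwap).prod)) = (Jm v)^m := by
  intro m
  induction m with
  | zero => simp [Blocks, og, pow_zero]; rfl
  | succ m ih =>
    rw [Blocks]
    rw [Finset.sum_biUnion]
    · calc ∑ i ∈ Finset.Iio v, ∑ l ∈ (Blocks v m).image (List.cons (i, v)),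
            og ((l.map toSwap).prod)
          = ∑ i ∈ Finset.Iio v, ∑ t ∈ Blocks v m, og (Equiv.swap i v * (t.map toSwap).prod) := by
            refine Finset.sum_congr rfl fun i _ => ?_
            rw [Finset.sum_image (fun a _ b _ h => List.tail_eq_of_cons_eq h)]
            exact Finset.sum_congr rfl fun t _ => by simp [toSwap]
        _ = (Jm v)^(m+1) := by
            rw [pow_succ', ← ih, Jm, Finset.sum_mul]
            refine Finset.sum_congr rfl fun i _ => ?_
            rw [Finset.mul_sum]
            exact Finset.sum_congr rfl fun t _ => og_mul _ _
    · intro i _ i' _ hne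
      simp only [Function.onFun]
      rw [Finset.disjoint_left]
      rintro l hl hl'
      simp only [Finset.mem_image] at hl hl'
      obtain ⟨t, _, rfl⟩ := hl
      obtain ⟨t', _, h⟩ := hl'
      exact hne (congrArg Prod.fst (List.head_eq_of_cons_eq h)).symm

def WalksP : List (Fin d) → ℕ → Finset (List (Fin d × Fin d))
  | [], 0 => {[]}
  | [], _+1 => ∅
  | v :: vs, r => (Finset.range (r+1)).biUnion fun m =>
      ((Blocks v m) ×ˢ WalksP vs (r-m)).image fun q => q.1 ++ q.2


lemma dropWhile_head_false {α : Type*} (P : α → Bool) : ∀ (l : List α) (p0 : α) (t' : List α),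
    l.dropWhile P = p0 :: t' → P p0 = false := by
  intro l
  induction l with
  | nil => intro p0 t' h; simp [List.dropWhile] at h
  | cons a l' ih =>
    intro p0 t' h
    rw [List.dropWhile_cons] at h
    by_cases hP : P a = true
    · rw [if_pos hP] at h; exact ih _ _ h
    · rw [if_neg hP] at h
      cases h
      simpa using hP


lemma mem_WalksP : ∀ (vs : List (Fin d)), vs.Pairwise (· < ·) → ∀ (r : ℕ) (l : List (Fin d × Fin d)),
    (l ∈ WalksP vs r ↔ l.length = r ∧ (∀ p ∈ l, p.1 < p.2) ∧
      (l.map Prod.snd).Pairwise (· ≤ ·) ∧ ∀ p ∈ l, p.2 ∈ vs) := by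
  intro vs
  induction vs with
  | nil =>
    intro _ r l
    cases r with
    | zero =>
      simp only [WalksP, Finset.mem_singleton]
      constructor
      · rintro rfl; simp
      · rintro ⟨hlen, -⟩; exact List.length_eq_zero_iff.mp hlen
    | succ n =>
      simp only [WalksP, Finset.notMem_empty, false_iff]
      rintro ⟨hlen, -, -, hmem⟩
      cases l with
      | nil => simp at hlen
      | cons p t => simpa using hmem p (by simp)
  | cons v vs ih =>
    intro hsort r l
    rw [List.pairwise_cons] at hsort
    obtain ⟨hv, hsort'⟩ := hsort
    show l ∈ (Finset.range (r+1)).biUnion _ ↔ _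
    simp only [Finset.mem_biUnion, Finset.mem_image, Finset.mem_range, Finset.mem_product]
    constructor
    · rintro ⟨m, hm, ⟨b, t⟩, ⟨hb, ht⟩, rfl⟩
      obtain ⟨hblen, hbprop⟩ := mem_Blocks.mp hb
      obtain ⟨htlen, htvalid, htsort, htmem⟩ := (ih hsort' (r-m) t).mp ht
      refine ⟨?_, ?_, ?_, ?_⟩
      · rw [List.length_append, hblen, htlen]; omega
      · intro p hp
        rcases List.mem_append.mp hp with hp | hp
        · obtain ⟨h2, h1⟩ := hbprop p hp
          rw [h2]; exact h1
        · exact htvalid p hp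
      · rw [List.map_append]
        show List.Pairwise _ _
        rw [List.pairwise_append]
        refine ⟨?_, htsort, ?_⟩
        · refine List.pairwise_of_forall_mem_list fun x hx y hy => ?_
          obtain ⟨p, hp, rfl⟩ := List.mem_map.mp hx
          obtain ⟨q, hq, rfl⟩ := List.mem_map.mp hy
          rw [(hbprop p hp).1, (hbprop q hq).1]
        · intro x hx y hy
          obtain ⟨p, hp, rfl⟩ := List.mem_map.mp hx
          obtain ⟨q, hq, rfl⟩ := List.mem_map.mp hy
          rw [(hbprop p hp).1]
          exact le_of_lt (hv _ (htmem q hq))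
      · intro p hp
        rcases List.mem_append.mp hp with hp | hp
        · simp [(hbprop p hp).1]
        · simp [htmem p hp]
    · rintro ⟨hlen, hvalid, hsort2, hmem⟩
      set b := l.takeWhile (fun p => p.2 = v) with hbdef
      set t := l.dropWhile (fun p => p.2 = v) with htdef
      have hbt : b ++ t = l := List.takeWhile_append_dropWhile
      have hbv : ∀ p ∈ b, p.2 = v := by
        intro p hp
        have := List.mem_takeWhile_imp hp
        simpa using this
      have hsort3 : List.Pairwise (· ≤ ·) (List.map Prod.snd b ++ List.map Prod.snd t) := by
        rw [← List.map_append, hbt]; exact hsort2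
      rw [List.pairwise_append] at hsort3
      have htne : ∀ p ∈ t, p.2 ≠ v := by
        cases ht : t with
        | nil => simp
        | cons p0 t' =>
          have h0 : ¬ (p0.2 = v) := by
            have := dropWhile_head_false (fun p => decide (p.2 = v)) l p0 t'
              (by rw [← htdef]; exact ht)
            simpa using this
          have hp0l : p0 ∈ l := by rw [← hbt, ht]; simp
          have hp0vs : p0.2 ∈ vs := by
            rcases List.mem_cons.mp (hmem p0 hp0l) with h | h
            · exact absurd h h0
            · exact h
          intro p hp
          rcases List.mem_cons.mp hp with rfl | hp'
          · exact h0
          · have hle : p0.2 ≤ p.2 := by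
              have := hsort3.2.1
              rw [ht] at this
              simp only [List.map_cons, List.pairwise_cons] at this
              exact this.1 p.2 (List.mem_map_of_mem (f := Prod.snd) hp')
            have : v < p.2 := lt_of_lt_of_le (hv _ hp0vs) hle
            exact fun hcon => absurd (hcon ▸ this) (lt_irrefl v)
      have hlb : b.length + t.length = r := by
        rw [← List.length_append, hbt, hlen]
      refine ⟨b.length, by omega, ⟨b, t⟩, ⟨?_, ?_⟩, hbt⟩
      · refine mem_Blocks.mpr ⟨rfl, fun p hp => ⟨hbv p hp, ?_⟩⟩
        have : p.1 < p.2 := hvalid p (by rw [← hbt]; exact List.mem_append_left _ hp)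
        rwa [hbv p hp] at this
      · refine (ih hsort' (r - b.length) t).mpr ⟨by omega, ?_, ?_, ?_⟩
        · exact fun p hp => hvalid p (by rw [← hbt]; exact List.mem_append_right _ hp)
        · exact hsort3.2.1
        · intro p hp
          rcases List.mem_cons.mp (hmem p (by rw [← hbt]; exact List.mem_append_right _ hp)) with h | h
          · exact absurd h (htne p hp)
          · exact h

lemma sum_WalksP : ∀ (vs : List (Fin d)), vs.Pairwise (· < ·) → ∀ (r : ℕ),
    (∑ l ∈ WalksP vs r, og ((l.map toSwap).prod)) = Pform (vs.map Jm) r := by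
  intro vs
  induction vs with
  | nil =>
    intro _ r
    cases r with
    | zero => show (∑ l ∈ {[]}, _) = _; simp [Pform, og_one]
    | succ n => show (∑ l ∈ (∅ : Finset _), _) = _; simp [Pform]
  | cons v vs ih =>
    intro hsort r
    rw [List.pairwise_cons] at hsort
    obtain ⟨hv, hsort'⟩ := hsort
    -- injectivity of append on blocks of fixed length
    have hinj : ∀ m : ℕ, ∀ q1 ∈ (Blocks v m) ×ˢ WalksP vs (r-m),
        ∀ q2 ∈ (Blocks v m) ×ˢ WalksP vs (r-m),
        q1.1 ++ q1.2 = q2.1 ++ q2.2 → q1 = q2 := by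
      rintro m ⟨b1, t1⟩ hq1 ⟨b2, t2⟩ hq2 heq
      rw [Finset.mem_product] at hq1 hq2
      dsimp only at hq1 hq2 heq ⊢
      have h1 : b1.length = m := (mem_Blocks.mp hq1.1).1
      have h2 : b2.length = m := (mem_Blocks.mp hq2.1).1
      obtain ⟨hb, ht⟩ := List.append_inj heq (h1.trans h2.symm)
      exact Prod.ext hb ht
    -- disjointness of the images for different m
    have hdisj : ∀ m1, m1 ∈ Finset.range (r+1) → ∀ m2, m2 ∈ Finset.range (r+1) → m1 ≠ m2 →
        Disjoint (((Blocks v m1) ×ˢ WalksP vs (r-m1)).image fun q => q.1 ++ q.2)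
          (((Blocks v m2) ×ˢ WalksP vs (r-m2)).image fun q => q.1 ++ q.2) := by
      have key : ∀ m1 m2, m1 < m2 → m2 ≤ r →
          ∀ l, l ∈ (((Blocks v m1) ×ˢ WalksP vs (r-m1)).image fun q => q.1 ++ q.2) →
          l ∈ (((Blocks v m2) ×ˢ WalksP vs (r-m2)).image fun q => q.1 ++ q.2) → False := by
        intro m1 m2 hlt hle l hl1 hl2
        simp only [Finset.mem_image, Finset.mem_product] at hl1 hl2
        obtain ⟨⟨b1, t1⟩, ⟨hb1, ht1⟩, heq1⟩ := hl1
        obtain ⟨⟨b2, t2⟩, ⟨hb2, ht2⟩, heq2⟩ := hl2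
        dsimp only at hb1 ht1 hb2 ht2 heq1 heq2
        obtain ⟨hb1len, -⟩ := mem_Blocks.mp hb1
        obtain ⟨hb2len, hb2prop⟩ := mem_Blocks.mp hb2
        obtain ⟨ht1len, -, -, ht1mem⟩ := (mem_WalksP vs hsort' (r-m1) t1).mp ht1
        have hidx1 : m1 < b2.length := by omega
        have hidx : m1 < l.length := by
          rw [← heq2, List.length_append]; omega
        have hp2 : l[m1]'hidx ∈ b2 := by
          have e2 : l[m1]'hidx = b2[m1]'hidx1 := by
            rw [List.getElem_of_eq heq2.symm hidx]
            exact List.getElem_append_left hidx1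
          rw [e2]
          exact List.getElem_mem _
        have hpv : (l[m1]'hidx).2 = v := (hb2prop _ hp2).1
        have hge : b1.length ≤ m1 := by omega
        have hidx3 : m1 - b1.length < t1.length := by
          have : l.length = b1.length + t1.length := by rw [← heq1, List.length_append]
          omega
        have hp1 : l[m1]'hidx ∈ t1 := by
          have e1 : l[m1]'hidx = t1[m1 - b1.length]'hidx3 := by
            rw [List.getElem_of_eq heq1.symm hidx]
            exact List.getElem_append_right hge
          rw [e1]
          exact List.getElem_mem _
        have : (l[m1]'hidx).2 ∈ vs := ht1mem _ hp1
        exact absurd (hpv ▸ hv _ this) (lt_irrefl v)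
      intro m1 hm1 m2 hm2 hne
      rw [Finset.mem_range] at hm1 hm2
      rw [Finset.disjoint_left]
      intro l hl1 hl2
      rcases hne.lt_or_gt with h | h
      · exact key m1 m2 h (by omega) l hl1 hl2
      · exact key m2 m1 h (by omega) l hl2 hl1
    show (∑ l ∈ (Finset.range (r+1)).biUnion _, _) = _
    rw [Finset.sum_biUnion hdisj]
    have hterm : ∀ m ∈ Finset.range (r+1),
        (∑ l ∈ ((Blocks v m) ×ˢ WalksP vs (r-m)).image (fun q => q.1 ++ q.2),
          og ((l.map toSwap).prod))
        = (Jm v)^m * Pform (vs.map Jm) (r-m) := by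
      intro m _
      rw [Finset.sum_image (hinj m), Finset.sum_product]
      rw [← sum_Blocks (v := v) m, ← ih hsort' (r-m), Finset.sum_mul_sum]
      refine Finset.sum_congr rfl fun b _ => Finset.sum_congr rfl fun t _ => ?_
      rw [List.map_append, List.prod_append, og_mul]
    rw [Finset.sum_congr rfl hterm]
    rfl

lemma finRange_splice (a b : Fin d) (hab : (a:ℕ) + 1 = (b:ℕ)) :
    ∃ L1 L2 : List (Fin d), List.finRange d = L1 ++ a :: b :: L2 ∧
      (∀ z ∈ L1, z < a) ∧ (∀ z ∈ L2, b < z) := by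
  have hlen : (List.finRange d).length = d := List.length_finRange
  have ha : (a:ℕ) < d := a.2
  have hb : (b:ℕ) < d := b.2
  refine ⟨(List.finRange d).take a, (List.finRange d).drop ((a:ℕ)+2), ?_, ?_, ?_⟩
  · have h2 : (List.finRange d).drop (a:ℕ)
        = (List.finRange d)[(a:ℕ)]'(by omega) :: (List.finRange d).drop ((a:ℕ)+1) :=
      List.drop_eq_getElem_cons (by omega)
    have h3 : (List.finRange d).drop ((a:ℕ)+1)
        = (List.finRange d)[(a:ℕ)+1]'(by omega) :: (List.finRange d).drop ((a:ℕ)+2) :=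
      List.drop_eq_getElem_cons (by omega)
    have e1 : (List.finRange d)[(a:ℕ)]'(by omega) = a := by
      rw [List.getElem_finRange]; exact Fin.ext (by simp)
    have e2 : (List.finRange d)[(a:ℕ)+1]'(by omega) = b := by
      rw [List.getElem_finRange]; exact Fin.ext (by simp [hab])
    rw [e1] at h2
    rw [e2] at h3
    conv_lhs => rw [← List.take_append_drop ((a:ℕ)) (List.finRange d)]
    rw [h2, h3]
  · intro z hz
    rw [List.mem_take_iff_getElem] at hz
    obtain ⟨i, hi, rfl⟩ := hz
    rw [List.getElem_finRange, Fin.lt_def]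
    simp only [hlen] at hi
    simp only [Fin.coe_cast]
    omega
  · intro z hz
    rw [List.mem_iff_getElem] at hz
    obtain ⟨i, hi, rfl⟩ := hz
    rw [List.getElem_drop, List.getElem_finRange, Fin.lt_def]
    simp only [Fin.coe_cast]
    omega

lemma hab_lt' {a b : Fin d} (hab : (a:ℕ) + 1 = (b:ℕ)) : a < b := by rw [Fin.lt_def]; omega

-- the master element
def Zr (d r : ℕ) : PA d := Pform ((List.finRange d).map Jm) r

lemma comm_swap_Zr {a b : Fin d} (hab : (a:ℕ) + 1 = (b:ℕ)) (r : ℕ) :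
    Commute (og (Equiv.swap a b)) (Zr d r) := by
  obtain ⟨L1, L2, hsplit, hL1, hL2⟩ := finRange_splice a b hab
  have hlt := hab_lt' hab
  have hxy : Commute (Jm a) (Jm b) := R4 hlt
  have hs1 : Commute (og (Equiv.swap a b)) (Jm a + Jm b) := by
    unfold Commute SemiconjBy
    rw [mul_add, add_mul, R2 hab, R3 hab]
    abel
  have hs2 : Commute (og (Equiv.swap a b)) (Jm a * Jm b) := by
    unfold Commute SemiconjBy
    rw [← mul_assoc, R2 hab, sub_mul, one_mul, mul_assoc, R3 hab, mul_add, mul_one,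
      ← mul_assoc, hxy.eq, mul_assoc]
    abel
  have hmap : (List.finRange d).map Jm = (L1.map Jm) ++ Jm a :: Jm b :: (L2.map Jm) := by
    rw [hsplit, List.map_append, List.map_cons, List.map_cons]
  rw [Zr, hmap]
  refine comm_Pform_splice hs1 hs2 hxy (L1.map Jm) ?_ ?_ r
  · intro z hz
    obtain ⟨j, hj, rfl⟩ := List.mem_map.mp hz
    have h1 : j ≠ a := Fin.ne_of_lt (hL1 j hj)
    have h2 : j ≠ b := Fin.ne_of_lt ((hL1 j hj).trans hlt)
    exact R1 hab h1 h2
  · intro z hz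
    obtain ⟨j, hj, rfl⟩ := List.mem_map.mp hz
    have h1 : j ≠ a := Fin.ne_of_gt (hlt.trans (hL2 j hj))
    have h2 : j ≠ b := Fin.ne_of_gt (hL2 j hj)
    exact R1 hab h1 h2

lemma og_unit_commute {g : Equiv.Perm (Fin d)} {Z : PA d} (h : Commute (og g) Z) :
    Commute (og g⁻¹) Z := by
  have h1 : og g * og g⁻¹ = 1 := by
    simp [og, MonoidAlgebra.single_mul_single, ← MonoidAlgebra.one_def]
  have h2 : og g⁻¹ * og g = 1 := by
    simp [og, MonoidAlgebra.single_mul_single, ← MonoidAlgebra.one_def]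
  unfold Commute SemiconjBy at h ⊢
  calc og g⁻¹ * Z = og g⁻¹ * Z * (og g * og g⁻¹) := by rw [h1, mul_one]
    _ = og g⁻¹ * (Z * og g) * og g⁻¹ := by noncomm_ring
    _ = og g⁻¹ * (og g * Z) * og g⁻¹ := by rw [h]
    _ = (og g⁻¹ * og g) * (Z * og g⁻¹) := by noncomm_ring
    _ = Z * og g⁻¹ := by rw [h2, one_mul]

lemma comm_all_Zr (hd : 1 ≤ d) (r : ℕ) (g : Equiv.Perm (Fin d)) :
    Commute (og g) (Zr d r) := by
  obtain ⟨n, rfl⟩ : ∃ n, d = n + 1 := ⟨d - 1, by omega⟩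
  have hgen := Equiv.Perm.mclosure_swap_castSucc_succ n
  have hg : g ∈ Submonoid.closure (Set.range fun i : Fin n => Equiv.swap i.castSucc i.succ) := by
    rw [hgen]; trivial
  induction hg using Submonoid.closure_induction with
  | mem s hs =>
    obtain ⟨i, rfl⟩ := hs
    exact comm_swap_Zr (a := i.castSucc) (b := i.succ) (by simp) r
  | one =>
    have : og (1 : Equiv.Perm (Fin (n+1))) = 1 := rfl
    rw [this]
    exact Commute.one_left _
  | mul x y _ _ hx hy =>
    have : og (x * y) = og x * og y := by simp [og, MonoidAlgebra.single_mul_single]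
    rw [this]
    exact hx.mul_left hy

-- coefficient invariance under conjugation
lemma Zr_conj (hd : 1 ≤ d) (r : ℕ) (g π : Equiv.Perm (Fin d)) :
    (Zr d r).coeff (g * π * g⁻¹) = (Zr d r).coeff π := by
  have h := comm_all_Zr hd r g
  unfold Commute SemiconjBy at h
  have h1 : (og g * Zr d r).coeff (g * π) = (Zr d r * og g).coeff (g * π) := by rw [h]
  rw [og] at h1
  rw [MonoidAlgebra.coeff_single_mul_mul, MonoidAlgebra.coeff_mul_single_apply] at h1
  simp only [one_mul, mul_one] at h1
  exact h1.symm

-- walk counting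
lemma Wle_card (r : ℕ) (π : Equiv.Perm (Fin d)) :
    Wle d r 1 π = (((WalksP (List.finRange d) r)).filter
      (fun l => (l.map toSwap).prod = π)).card := by
  rw [Wle, ← Nat.card_eq_finsetCard]
  apply Nat.card_congr
  apply Equiv.subtypeEquivRight
  intro l
  rw [Finset.mem_filter,
    mem_WalksP (List.finRange d) (List.pairwise_lt_finRange d) r l]
  constructor
  · rintro ⟨h1, h2, h3, h4⟩
    exact ⟨⟨h1, h2, h3, fun p _ => List.mem_finRange _⟩, by rwa [one_mul] at h4⟩
  · rintro ⟨⟨h1, h2, h3, -⟩, h4⟩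
    exact ⟨h1, h2, h3, by rwa [one_mul]⟩

lemma Zr_coeff (r : ℕ) (π : Equiv.Perm (Fin d)) :
    (Zr d r).coeff π = (Wle d r 1 π : ℤ) := by
  rw [Wle_card r π, Zr, ← sum_WalksP (List.finRange d) (List.pairwise_lt_finRange d) r]
  rw [MonoidAlgebra.coeff_sum, Finsupp.finset_sum_apply]
  calc ∑ l ∈ WalksP (List.finRange d) r, (og ((l.map toSwap).prod)).coeff π
      = ∑ l ∈ WalksP (List.finRange d) r,
          (if (l.map toSwap).prod = π then (1:ℤ) else 0) :=
        Finset.sum_congr rfl (fun l _ => by rw [og, MonoidAlgebra.coeff_single, Finsupp.single_apply])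
    _ = ∑ l ∈ (WalksP (List.finRange d) r).filter (fun l => (l.map toSwap).prod = π), (1:ℤ) :=
        (Finset.sum_filter _ _).symm
    _ = _ := by simp

/-- The number of weakly monotone `r`-step walks from the identity to `π`
depends only on the conjugacy class (cycle type) of `π`; consequently `W^r_≤(ρ,σ)` depends only
on the cycle type of `ρ⁻¹σ`. -/
theorem Wle_conj_invariant (d r : ℕ) (hd : 1 ≤ d) :
    (∀ π π' : Equiv.Perm (Fin d), IsConj π π' → Wle d r 1 π = Wle d r 1 π') ∧
    (∀ ρ σ ρ' σ' : Equiv.Perm (Fin d), IsConj (ρ⁻¹ * σ) (ρ'⁻¹ * σ') →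
      Wle d r ρ σ = Wle d r ρ' σ') := by
  have part1 : ∀ π π' : Equiv.Perm (Fin d), IsConj π π' → Wle d r 1 π = Wle d r 1 π' := by
    intro π π' hconj
    obtain ⟨c, hc⟩ := isConj_iff.mp hconj
    have hπ' : π' = c * π * c⁻¹ := hc.symm
    have hz : (Zr d r).coeff π' = (Zr d r).coeff π := by rw [hπ']; exact Zr_conj hd r c π
    have h1 := Zr_coeff (d := d) r π
    have h2 := Zr_coeff (d := d) r π'
    have : (Wle d r 1 π' : ℤ) = (Wle d r 1 π : ℤ) := by rw [← h1, ← h2, hz]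
    exact_mod_cast this.symm
  refine ⟨part1, ?_⟩
  intro ρ σ ρ' σ' hconj
  have key : ∀ ρ σ : Equiv.Perm (Fin d), Wle d r ρ σ = Wle d r 1 (ρ⁻¹ * σ) := by
    intro ρ σ
    unfold Wle
    apply Nat.card_congr
    apply Equiv.subtypeEquivRight
    intro l
    constructor
    · rintro ⟨h1, h2, h3, h4⟩
      refine ⟨h1, h2, h3, ?_⟩
      rw [one_mul, ← h4]
      group
    · rintro ⟨h1, h2, h3, h4⟩
      refine ⟨h1, h2, h3, ?_⟩
      rw [one_mul] at h4
      rw [h4]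
      group
  rw [key ρ σ, key ρ' σ']
  exact part1 _ _ hconj

end PermAlg
end
end

section
/- Let d ≥ 1 and r ≥ 0. For all ρ, σ ∈ S_d, the number W^r_≤(ρ,σ) of weakly increasing r-step walks from ρ to σ in the Hurwitz–Cayley graph equals the number W^r_≥(ρ,σ) of weakly decreasing r-step walks from ρ to σ. -/
noncomputable section

/-- `Wge d r ρ σ` is the number of weakly decreasing `r`-step walks `ρ → σ` in the
Hurwitz–Cayley graph: sequences of transpositions `((i_1 j_1), …, (i_r j_r))` with `i_k < j_k`,
`j_1 ≥ j_2 ≥ ⋯ ≥ j_r` and `ρ·(i_1 j_1)⋯(i_r j_r) = σ`. -/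
def Wge (d r : ℕ) (ρ σ : Equiv.Perm (Fin d)) : ℕ :=
  Nat.card {l : List (Fin d × Fin d) //
    l.length = r ∧ (∀ p ∈ l, p.1 < p.2) ∧ (l.map Prod.snd).Pairwise (· ≥ ·) ∧
      ρ * (l.map toSwap).prod = σ}

namespace WW
open Equiv Finset MonoidAlgebra

variable {d : ℕ}

abbrev GA (d : ℕ) : Type := MonoidAlgebra ℤ (Equiv.Perm (Fin d))

def pairSet (s : Finset (Fin d)) : Finset (Fin d × Fin d) :=
  (s ×ˢ s).filter fun p => p.1 < p.2

def XSet (j : Fin d) : Finset (Fin d × Fin d) :=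
  Finset.univ.filter fun p => p.1 < p.2 ∧ p.2 = j

def Zs (s : Finset (Fin d)) : GA d :=
  ∑ p ∈ pairSet s, MonoidAlgebra.single (toSwap p) 1

def Xe (j : Fin d) : GA d :=
  ∑ p ∈ XSet j, MonoidAlgebra.single (toSwap p) 1

/-- conjugation-reindex map -/
def conjMap (i j : Fin d) (p : Fin d × Fin d) : Fin d × Fin d :=
  if Equiv.swap i j p.1 < Equiv.swap i j p.2 then (Equiv.swap i j p.1, Equiv.swap i j p.2)
  else (Equiv.swap i j p.2, Equiv.swap i j p.1)

lemma toSwap_conjMap (i j : Fin d) (p : Fin d × Fin d) :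
    toSwap (conjMap i j p) = Equiv.swap i j * toSwap p * (Equiv.swap i j)⁻¹ := by
  unfold conjMap toSwap
  rw [← Equiv.swap_apply_apply]
  split
  · rfl
  · exact Equiv.swap_comm _ _

lemma conjMap_mem {s : Finset (Fin d)} {i j : Fin d} (hi : i ∈ s) (hj : j ∈ s)
    {p : Fin d × Fin d} (hp : p ∈ pairSet s) : conjMap i j p ∈ pairSet s := by
  simp only [pairSet, mem_filter, mem_product] at hp ⊢
  obtain ⟨⟨h1, h2⟩, hlt⟩ := hp
  have hmem : ∀ x ∈ s, Equiv.swap i j x ∈ s := by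
    intro x hx
    rcases eq_or_ne x i with rfl | hxi
    · rwa [Equiv.swap_apply_left]
    rcases eq_or_ne x j with rfl | hxj
    · rwa [Equiv.swap_apply_right]
    · rwa [Equiv.swap_apply_of_ne_of_ne hxi hxj]
  have hne : Equiv.swap i j p.1 ≠ Equiv.swap i j p.2 := by
    simp [hlt.ne]
  unfold conjMap
  split_ifs with h
  · exact ⟨⟨hmem _ h1, hmem _ h2⟩, h⟩
  · exact ⟨⟨hmem _ h2, hmem _ h1⟩, lt_of_le_of_ne (not_lt.mp h) hne.symm⟩

lemma conjMap_conjMap (i j : Fin d) {p : Fin d × Fin d} (hp : p.1 < p.2) :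
    conjMap i j (conjMap i j p) = p := by
  rcases lt_or_ge (Equiv.swap i j p.1) (Equiv.swap i j p.2) with h | h
  · rw [show conjMap i j p = (Equiv.swap i j p.1, Equiv.swap i j p.2) from by
      rw [conjMap, if_pos h], conjMap]
    simp only [Equiv.swap_apply_self]
    rw [if_pos hp]
  · rw [show conjMap i j p = (Equiv.swap i j p.2, Equiv.swap i j p.1) from by
      rw [conjMap, if_neg (not_lt.mpr h)], conjMap]
    simp only [Equiv.swap_apply_self]
    rw [if_neg (asymm hp)]

lemma commute_single_Zs {s : Finset (Fin d)} {i j : Fin d} (hi : i ∈ s) (hj : j ∈ s) :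
    Commute (MonoidAlgebra.single (Equiv.swap i j) (1 : ℤ)) (Zs s) := by
  unfold Commute SemiconjBy Zs
  rw [Finset.mul_sum, Finset.sum_mul]
  refine Finset.sum_bij' (fun p _ => conjMap i j p) (fun p _ => conjMap i j p) ?_ ?_ ?_ ?_ ?_
  · exact fun p hp => conjMap_mem hi hj hp
  · exact fun p hp => conjMap_mem hi hj hp
  · intro p hp
    exact conjMap_conjMap i j (mem_filter.mp hp).2
  · intro p hp
    exact conjMap_conjMap i j (mem_filter.mp hp).2
  · intro p hp
    rw [MonoidAlgebra.single_mul_single, MonoidAlgebra.single_mul_single, one_mul]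
    congr 1
    rw [toSwap_conjMap, inv_mul_cancel_right]

lemma pairSet_Iic (j : Fin d) : pairSet (Iic j) = pairSet (Iio j) ∪ XSet j := by
  ext p
  simp only [pairSet, XSet, mem_union, mem_filter, mem_product, mem_Iic, mem_Iio, mem_univ,
    true_and]
  constructor
  · rintro ⟨⟨h1, h2⟩, hlt⟩
    rcases lt_or_eq_of_le h2 with h | h
    · exact Or.inl ⟨⟨lt_of_lt_of_le hlt h2, h⟩, hlt⟩
    · exact Or.inr ⟨hlt, h⟩
  · rintro (⟨⟨h1, h2⟩, hlt⟩ | ⟨hlt, h⟩)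
    · exact ⟨⟨le_of_lt h1, le_of_lt h2⟩, hlt⟩
    · exact ⟨⟨le_of_lt (h ▸ hlt), le_of_eq h⟩, hlt⟩

lemma Xe_eq (j : Fin d) : Xe j = Zs (Iic j) - Zs (Iio j) := by
  have hdisj : Disjoint (pairSet (Iio j)) (XSet j) := by
    rw [Finset.disjoint_left]
    intro p hp hp'
    simp only [pairSet, mem_filter, mem_product, mem_Iio] at hp
    simp only [XSet, mem_filter] at hp'
    exact absurd hp'.2.2 (ne_of_lt hp.1.2)
  rw [eq_sub_iff_add_eq, Xe, Zs, Zs, ← Finset.sum_union hdisj.symm, Finset.union_comm,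
    ← pairSet_Iic]

lemma commute_Xe_Zs {j : Fin d} {s : Finset (Fin d)} (h : ∀ x : Fin d, x ≤ j → x ∈ s) :
    Commute (Xe j) (Zs s) := by
  unfold Xe
  apply Commute.sum_left
  intro p hp
  simp only [XSet, mem_filter] at hp
  obtain ⟨-, hlt, rfl⟩ := hp
  exact commute_single_Zs (h _ hlt.le) (h _ le_rfl)

lemma commute_Xe (j k : Fin d) : Commute (Xe j) (Xe k) := by
  rcases lt_trichotomy j k with h | rfl | h
  · rw [Xe_eq k]
    refine Commute.sub_right ?_ ?_
    · exact commute_Xe_Zs (fun x hx => mem_Iic.mpr (hx.trans h.le))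
    · exact commute_Xe_Zs (fun x hx => mem_Iio.mpr (lt_of_le_of_lt hx h))
  · rfl
  · symm
    rw [Xe_eq j]
    refine Commute.sub_right ?_ ?_
    · exact commute_Xe_Zs (fun x hx => mem_Iic.mpr (hx.trans h.le))
    · exact commute_Xe_Zs (fun x hx => mem_Iio.mpr (lt_of_le_of_lt hx h))

end WW

namespace WW
open Equiv Finset MonoidAlgebra

variable {d : ℕ}

abbrev WalkSet (d : ℕ) (js : List (Fin d)) (π : Equiv.Perm (Fin d)) : Type :=
  {l : List (Fin d × Fin d) //
    l.map Prod.snd = js ∧ (∀ p ∈ l, p.1 < p.2) ∧ (l.map toSwap).prod = π}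

instance (js : List (Fin d)) (π : Equiv.Perm (Fin d)) : Finite (WalkSet d js π) :=
  Finite.of_injective (β := List.Vector (Fin d × Fin d) js.length)
    (fun l => ⟨l.1, by simpa using congrArg List.length l.2.1⟩)
    (fun a b h => Subtype.ext (congrArg List.Vector.toList h))

lemma card_nil (π : Equiv.Perm (Fin d)) :
    Nat.card (WalkSet d [] π) = if π = 1 then 1 else 0 := by
  split_ifs with h
  · subst h
    have : Unique (WalkSet d [] 1) :=
      { default := ⟨[], by simp⟩
        uniq := by
          rintro ⟨l, hl, -, -⟩
          apply Subtype.ext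
          simpa using hl }
    exact Nat.card_unique
  · have : IsEmpty (WalkSet d [] π) := by
      constructor
      rintro ⟨l, hl, -, hp⟩
      apply h
      rw [List.map_eq_nil_iff] at hl
      subst hl
      simpa using hp.symm
    exact Nat.card_of_isEmpty

def consEquiv (j : Fin d) (js : List (Fin d)) (π : Equiv.Perm (Fin d)) :
    WalkSet d (j :: js) π ≃
      Σ p : {p : Fin d × Fin d // p ∈ XSet j}, WalkSet d js ((toSwap p.1)⁻¹ * π) where
  toFun x :=
    match x with
    | ⟨[], h⟩ => absurd h.1 (by simp)
    | ⟨q :: l, h⟩ =>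
      ⟨⟨q, by
          simp only [XSet, mem_filter, mem_univ, true_and]
          refine ⟨h.2.1 q List.mem_cons_self, ?_⟩
          have := h.1
          simp only [List.map_cons, List.cons.injEq] at this
          exact this.1⟩,
        ⟨l, by
          have := h.1
          simp only [List.map_cons, List.cons.injEq] at this
          exact this.2,
          fun p hp => h.2.1 p (List.mem_cons_of_mem q hp), by
          have := h.2.2
          simp only [List.map_cons, List.prod_cons] at this
          exact eq_inv_mul_iff_mul_eq.mpr this⟩⟩
  invFun y :=
    ⟨y.1.1 :: y.2.1, by
      obtain ⟨⟨q, hq⟩, ⟨l, h1, h2, h3⟩⟩ := y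
      simp only [XSet, mem_filter, mem_univ, true_and] at hq
      refine ⟨by simp [h1, hq.2], ?_, ?_⟩
      · intro p hp
        rcases List.mem_cons.mp hp with rfl | hp
        · exact hq.1
        · exact h2 p hp
      · simp only [List.map_cons, List.prod_cons, h3]
        group⟩
  left_inv := by
    rintro ⟨(_ | ⟨q, l⟩), h⟩
    · exact absurd h.1 (by simp)
    · rfl
  right_inv := by
    rintro ⟨⟨q, hq⟩, ⟨l, h⟩⟩
    rfl

end WW

namespace WW
open Equiv Finset MonoidAlgebra

variable {d : ℕ}

lemma card_cons (j : Fin d) (js : List (Fin d)) (π : Equiv.Perm (Fin d)) :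
    Nat.card (WalkSet d (j :: js) π) =
      ∑ p ∈ XSet j, Nat.card (WalkSet d js ((toSwap p)⁻¹ * π)) := by
  rw [Nat.card_congr (consEquiv j js π)]
  letI : ∀ p : {p : Fin d × Fin d // p ∈ XSet j},
      Fintype (WalkSet d js ((toSwap p.1)⁻¹ * π)) := fun p => Fintype.ofFinite _
  rw [Nat.card_eq_fintype_card, Fintype.card_sigma]
  rw [← Finset.sum_coe_sort (XSet j) (fun p => Nat.card (WalkSet d js ((toSwap p)⁻¹ * π)))]
  refine Finset.sum_congr rfl fun p _ => ?_
  exact (Nat.card_eq_fintype_card).symm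

lemma coeff_eq (js : List (Fin d)) (π : Equiv.Perm (Fin d)) :
    ((js.map Xe).prod : GA d).coeff π = (Nat.card (WalkSet d js π) : ℤ) := by
  induction js generalizing π with
  | nil =>
    rw [List.map_nil, List.prod_nil, card_nil]
    rw [MonoidAlgebra.one_def]
    rw [MonoidAlgebra.single_apply]
    by_cases h : π = 1
    · rw [if_pos h.symm, if_pos h]; rfl
    · rw [if_neg (Ne.symm h), if_neg h]; rfl
  | cons j js ih =>
    rw [List.map_cons, List.prod_cons, card_cons]
    rw [Xe, Finset.sum_mul, MonoidAlgebra.coeff_sum, Finsupp.finset_sum_apply]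
    push_cast
    refine Finset.sum_congr rfl fun p hp => ?_
    rw [MonoidAlgebra.single_mul_apply, one_mul, ih]

end WW

namespace WW
open Equiv Finset MonoidAlgebra

variable {d : ℕ}

def decompEquiv (d r : ℕ) (R : Fin d → Fin d → Prop) (ρ σ : Equiv.Perm (Fin d)) :
    {l : List (Fin d × Fin d) //
      l.length = r ∧ (∀ p ∈ l, p.1 < p.2) ∧ (l.map Prod.snd).Pairwise R ∧
        ρ * (l.map toSwap).prod = σ} ≃
      Σ v : {v : List.Vector (Fin d) r // v.toList.Pairwise R},
        WalkSet d v.1.toList (ρ⁻¹ * σ) where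
  toFun x := ⟨⟨⟨x.1.map Prod.snd, by simp [x.2.1]⟩, x.2.2.2.1⟩,
    ⟨x.1, rfl, x.2.2.1, eq_inv_mul_iff_mul_eq.mpr x.2.2.2.2⟩⟩
  invFun y := ⟨y.2.1, by
    obtain ⟨⟨⟨v, hv⟩, hs⟩, ⟨l, h1, h2, h3⟩⟩ := y
    dsimp at h1 ⊢
    refine ⟨?_, h2, ?_, ?_⟩
    · rw [← hv, ← h1]; simp
    · rw [h1]; exact hs
    · rw [h3]; group⟩
  left_inv := by rintro ⟨l, h⟩; rfl
  right_inv := by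
    rintro ⟨⟨⟨v, hv⟩, hs⟩, ⟨l, h1, h2, h3⟩⟩
    dsimp at h1
    subst h1
    rfl

lemma card_eq_sum (r : ℕ) (R : Fin d → Fin d → Prop) (ρ σ : Equiv.Perm (Fin d))
    [Fintype {v : List.Vector (Fin d) r // v.toList.Pairwise R}] :
    (Nat.card {l : List (Fin d × Fin d) //
      l.length = r ∧ (∀ p ∈ l, p.1 < p.2) ∧ (l.map Prod.snd).Pairwise R ∧
        ρ * (l.map toSwap).prod = σ} : ℤ) =
      ∑ v : {v : List.Vector (Fin d) r // v.toList.Pairwise R},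
        ((v.1.toList.map Xe).prod : GA d).coeff (ρ⁻¹ * σ) := by
  rw [Nat.card_congr (decompEquiv d r R ρ σ)]
  letI : ∀ v : {v : List.Vector (Fin d) r // v.toList.Pairwise R},
      Fintype (WalkSet d v.1.toList (ρ⁻¹ * σ)) := fun v => Fintype.ofFinite _
  rw [Nat.card_eq_fintype_card, Fintype.card_sigma]
  push_cast
  refine Finset.sum_congr rfl fun v _ => ?_
  rw [coeff_eq, Nat.card_eq_fintype_card]

lemma pairwise_commute (js : List (Fin d)) : (js.map Xe).Pairwise Commute := by
  induction js with
  | nil => simp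
  | cons a l ih =>
    rw [List.map_cons, List.pairwise_cons]
    refine ⟨?_, ih⟩
    rintro b hb
    obtain ⟨c, -, rfl⟩ := List.mem_map.mp hb
    exact commute_Xe a c

lemma prod_reverse (js : List (Fin d)) :
    ((js.reverse.map Xe).prod : GA d) = (js.map Xe).prod := by
  rw [List.map_reverse]
  exact List.Perm.prod_eq' ((js.map Xe).reverse_perm)
    (List.pairwise_reverse.mpr ((pairwise_commute js).imp fun h => h.symm))

def revEquiv (r : ℕ) :
    {v : List.Vector (Fin d) r // v.toList.Pairwise (· ≤ ·)} ≃
      {v : List.Vector (Fin d) r // v.toList.Pairwise (· ≥ ·)} where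
  toFun v := ⟨v.1.reverse, by
    rw [List.Vector.toList_reverse]
    exact List.pairwise_reverse.mpr v.2⟩
  invFun v := ⟨v.1.reverse, by
    rw [List.Vector.toList_reverse]
    exact List.pairwise_reverse.mpr v.2⟩
  left_inv v := Subtype.ext (List.Vector.toList_injective (by simp))
  right_inv v := Subtype.ext (List.Vector.toList_injective (by simp))

end WW


/-- The number of weakly increasing `r`-step walks `ρ → σ` in the
Hurwitz–Cayley graph equals the number of weakly decreasing `r`-step walks `ρ → σ`. -/
theorem Wle_eq_Wge (d r : ℕ) (hd : 1 ≤ d) (ρ σ : Equiv.Perm (Fin d)) :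
    Wle d r ρ σ = Wge d r ρ σ := by
  letI F1 : Fintype {v : List.Vector (Fin d) r // v.toList.Pairwise (· ≤ ·)} :=
    Fintype.ofFinite _
  letI F2 : Fintype {v : List.Vector (Fin d) r // v.toList.Pairwise (· ≥ ·)} :=
    Fintype.ofFinite _
  have hle := WW.card_eq_sum r (· ≤ ·) ρ σ
  have hge := WW.card_eq_sum r (· ≥ ·) ρ σ
  have key : (Wle d r ρ σ : ℤ) = (Wge d r ρ σ : ℤ) := by
    rw [Wle, Wge, hle, hge]
    rw [← Equiv.sum_comp (WW.revEquiv r)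
      (fun v => ((v.1.toList.map WW.Xe).prod : WW.GA d).coeff (ρ⁻¹ * σ))]
    refine Finset.sum_congr rfl fun v _ => ?_
    rw [show ((WW.revEquiv r) v).1.toList = v.1.toList.reverse from
      List.Vector.toList_reverse, WW.prod_reverse]
  exact_mod_cast key
end
end
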